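/- arXiv:1609.01649 — 8 statements merged into one kernel-verified Lean document; each statement's English description precedes it below -/
import Mathlib

section
/- Let E ⊆ ℝ² have finite 1-dimensional Hausdorff measure and let L ⊆ ℝ² be a line segment. Then the Lebesgue measure of the set ⋃_{p ∈ L} (p + E) is at most C · H¹(E) · H¹(L) for an absolute constant C > 0. -/
open MeasureTheory Set ENNReal Filter



lemma sweep_piece (t : Set ℂ) (a b : ℂ) (r : ℝ) (hr : 0 < r)
    (hd : EMetric.diam t ≤ ENNReal.ofReal r) :
    volume (⋃ p ∈ segment ℝ a b, (fun x => p + x) '' t) ≤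
      16 * ENNReal.ofReal r * (edist a b + 2 * ENNReal.ofReal r) := by
  rcases t.eq_empty_or_nonempty with rfl | ⟨x₀, hx₀⟩
  · simp
  set K := dist a b with hKdef
  have hK0 : 0 ≤ K := dist_nonneg
  set N := max 1 ⌈K / r⌉₊ with hNdef
  have hN1 : 1 ≤ N := le_max_left _ _
  have hNpos : (0:ℝ) < N := by exact_mod_cast Nat.lt_of_lt_of_le Nat.zero_lt_one hN1
  have hKN : K ≤ N * r := by
    have h1 : K / r ≤ (N:ℝ) := by
      refine le_trans (Nat.le_ceil _) ?_
      exact_mod_cast le_max_right 1 ⌈K / r⌉₊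
    have := (div_le_iff₀ hr).mp h1
    linarith
  have hNle : (N:ℝ) ≤ K / r + 1 := by
    have h0 : 0 ≤ K / r := by positivity
    have h2 : (⌈K / r⌉₊ : ℝ) < K / r + 1 := Nat.ceil_lt_add_one h0
    rw [hNdef, Nat.cast_max]
    exact max_le (by norm_num; linarith) h2.le
  have hcov : (⋃ p ∈ segment ℝ a b, (fun x => p + x) '' t) ⊆
      ⋃ j ∈ Finset.range (N + 1),
        Metric.closedBall (a + ((j : ℝ) / N) • (b - a) + x₀) (2 * r) := by
    rintro z hz
    simp only [Set.mem_iUnion, Set.mem_image] at hz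
    obtain ⟨p, hp, x, hx, rfl⟩ := hz
    rw [segment_eq_image'] at hp
    obtain ⟨u, hu, rfl⟩ := hp
    set j := ⌊u * N⌋₊ with hjdef
    have hu0 : 0 ≤ u := hu.1
    have hu1 : u ≤ 1 := hu.2
    have huN : 0 ≤ u * N := by positivity
    have hjle : (j : ℝ) ≤ u * N := Nat.floor_le huN
    have hjgt : u * N < (j : ℝ) + 1 := Nat.lt_floor_add_one _
    have hjN : j ≤ N := by
      have h : u * (N:ℝ) ≤ ((N:ℕ) : ℝ) := by nlinarith
      calc j = ⌊u * (N:ℝ)⌋₊ := rfl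
        _ ≤ ⌊((N:ℕ) : ℝ)⌋₊ := Nat.floor_le_floor h
        _ = N := Nat.floor_natCast N
    refine Set.mem_iUnion₂.2 ⟨j, Finset.mem_range.2 (Nat.lt_succ_of_le hjN), ?_⟩
    rw [Metric.mem_closedBall]
    have h1 : dist (a + u • (b - a) + x) (a + ((j:ℝ)/N) • (b - a) + x₀) ≤
        dist (a + u • (b - a)) (a + ((j:ℝ)/N) • (b - a)) + dist x x₀ :=
      dist_add_add_le _ _ _ _
    have h2 : dist (a + u • (b - a)) (a + ((j:ℝ)/N) • (b - a)) ≤ r := by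
      rw [dist_eq_norm]
      have he : (a + u • (b - a)) - (a + ((j:ℝ)/N) • (b - a))
          = (u - (j:ℝ)/N) • (b - a) := by
        rw [sub_smul]; abel
      rw [he, norm_smul]
      have habs : |u - (j:ℝ)/N| ≤ 1 / N := by
        rw [abs_le]
        constructor
        · have hju : (j:ℝ)/N ≤ u := by rw [div_le_iff₀ hNpos]; linarith
          have h1N : 0 ≤ 1 / (N:ℝ) := by positivity
          linarith
        · rw [sub_le_iff_le_add, ← add_div, le_div_iff₀ hNpos]
          linarith
      have hnorm : ‖b - a‖ = K := by rw [hKdef, dist_eq_norm, norm_sub_rev]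
      rw [hnorm, Real.norm_eq_abs]
      have := mul_le_mul_of_nonneg_right habs hK0
      have hdiv : (1 / (N:ℝ)) * K ≤ r := by
        rw [div_mul_eq_mul_div, one_mul, div_le_iff₀ hNpos]
        linarith
      linarith
    have h3 : dist x x₀ ≤ r := by
      rw [dist_edist]
      refine ENNReal.toReal_le_of_le_ofReal hr.le ?_
      exact le_trans (EMetric.edist_le_diam_of_mem hx hx₀) hd
    linarith
  have harith : ((N:ℝ≥0∞) + 1) * (ENNReal.ofReal (2*r) ^ 2 * NNReal.pi) ≤
      16 * ENNReal.ofReal r * (edist a b + 2 * ENNReal.ofReal r) := by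
    have hed : edist a b = ENNReal.ofReal K := by rw [hKdef, edist_dist]
    rw [hed]
    have hpi : (NNReal.pi : ℝ≥0∞) = ENNReal.ofReal Real.pi := by
      rw [← NNReal.coe_real_pi, ENNReal.ofReal_coe_nnreal]
    have hNcast : ((N:ℝ≥0∞) + 1) = ENNReal.ofReal ((N:ℝ) + 1) := by
      rw [ENNReal.ofReal_add (by positivity) zero_le_one]
      simp
    rw [hpi, hNcast, ← ENNReal.ofReal_pow (by positivity), ← ENNReal.ofReal_mul (by positivity),
      ← ENNReal.ofReal_mul (by positivity)]
    have hrhs : 16 * ENNReal.ofReal r * (ENNReal.ofReal K + 2 * ENNReal.ofReal r)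
        = ENNReal.ofReal ((16 * r) * (K + 2 * r)) := by
      rw [ENNReal.ofReal_mul (by positivity), ENNReal.ofReal_add hK0 (by positivity),
        ENNReal.ofReal_mul (by norm_num : (0:ℝ) ≤ 16), ENNReal.ofReal_mul (by norm_num : (0:ℝ) ≤ 2)]
      norm_num
    rw [hrhs]
    apply ENNReal.ofReal_le_ofReal
    have hpi4 : Real.pi ≤ 4 := Real.pi_le_four
    have hpi0 : 0 < Real.pi := Real.pi_pos
    have hNr : (N:ℝ) * r ≤ K + r := by
      have h := mul_le_mul_of_nonneg_right hNle hr.le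
      rw [add_mul, div_mul_cancel₀ _ hr.ne', one_mul] at h
      exact h
    nlinarith [hNr, sq_nonneg r, mul_pos hr hr, mul_le_mul_of_nonneg_right hNr hr.le,
      mul_le_mul_of_nonneg_left hpi4 (mul_nonneg (mul_nonneg hNpos.le hr.le) hr.le),
      mul_nonneg hr.le hK0]
  calc volume (⋃ p ∈ segment ℝ a b, (fun x => p + x) '' t)
      ≤ volume (⋃ j ∈ Finset.range (N + 1),
          Metric.closedBall (a + ((j : ℝ) / N) • (b - a) + x₀) (2 * r)) :=
        measure_mono hcov
    _ ≤ ∑ j ∈ Finset.range (N + 1),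
          volume (Metric.closedBall (a + ((j : ℝ) / N) • (b - a) + x₀) (2 * r)) :=
        measure_biUnion_finset_le _ _
    _ = ((N:ℝ≥0∞) + 1) * (ENNReal.ofReal (2*r) ^ 2 * NNReal.pi) := by
        simp [Complex.volume_closedBall, Finset.sum_const, Finset.card_range, nsmul_eq_mul]
    _ ≤ _ := harith

/-- Translating a set `E ⊆ ℝ²` of finite `H¹` measure along a line segment `L`
sweeps out a set of area at most `C · H¹(E) · H¹(L)` for an absolute constant `C`. -/
theorem translation_sweep_bound :
    ∃ C : ℝ≥0∞, 0 < C ∧ C ≠ ⊤ ∧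
      ∀ (E : Set ℂ) (a b : ℂ), μH[1] E ≠ ⊤ →
        volume (⋃ p ∈ segment ℝ a b, (fun x => p + x) '' E) ≤
          C * μH[1] E * μH[1] (segment ℝ a b) := by
  refine ⟨128, by norm_num, by norm_num, ?_⟩
  intro E a b hE
  rw [hausdorffMeasure_segment]
  set M := μH[1] E with hMdef
  set Ke := edist a b with hKedef
  have hKe : Ke ≠ ⊤ := edist_ne_top a b
  have key : ∀ δ : ℝ, 0 < δ →
      volume (⋃ p ∈ segment ℝ a b, (fun x => p + x) '' E) ≤
        128 * (M + ENNReal.ofReal δ) * (Ke + ENNReal.ofReal δ) := by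
    intro δ hδ
    have hδ' : 0 < ENNReal.ofReal δ := ENNReal.ofReal_pos.2 hδ
    have hlt : (⨅ (t : ℕ → Set ℂ) (_ : E ⊆ ⋃ n, t n)
        (_ : ∀ n, EMetric.diam (t n) ≤ ENNReal.ofReal δ),
          ∑' n, ⨆ _ : (t n).Nonempty, EMetric.diam (t n) ^ (1:ℝ)) <
        M + ENNReal.ofReal δ := by
      refine lt_of_le_of_lt ?_ (ENNReal.lt_add_right hE hδ'.ne')
      rw [hMdef, Measure.hausdorffMeasure_apply]
      exact le_iSup₂ (f := fun (r : ℝ≥0∞) (_ : 0 < r) =>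
        ⨅ (t : ℕ → Set ℂ) (_ : E ⊆ ⋃ n, t n) (_ : ∀ n, EMetric.diam (t n) ≤ r),
          ∑' n, ⨆ _ : (t n).Nonempty, EMetric.diam (t n) ^ (1:ℝ)) (ENNReal.ofReal δ) hδ'
    rw [iInf_lt_iff] at hlt
    obtain ⟨t, hlt⟩ := hlt
    rw [iInf_lt_iff] at hlt
    obtain ⟨ht_cov, hlt⟩ := hlt
    rw [iInf_lt_iff] at hlt
    obtain ⟨ht_diam, ht_sum⟩ := hlt
    simp only [ENNReal.rpow_one] at ht_sum
    have hDsum : ∑' n, EMetric.diam (t n) ≤ M + ENNReal.ofReal δ := by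
      refine le_trans (le_of_eq (tsum_congr fun n => ?_)) ht_sum.le
      rcases (t n).eq_empty_or_nonempty with h | h
      · simp [h]; exact Metric.ediam_empty
      · rw [iSup_pos h]
    set ρ : ℕ → ℝ≥0∞ := fun n =>
      EMetric.diam (t n) + ENNReal.ofReal δ * 2⁻¹ ^ (n + 1) with hρdef
    have hρ_top : ∀ n, ρ n ≠ ⊤ := by
      intro n
      refine ENNReal.add_ne_top.2 ⟨?_, ?_⟩
      · exact ne_top_of_le_ne_top ENNReal.ofReal_ne_top (ht_diam n)
      · exact ENNReal.mul_ne_top ENNReal.ofReal_ne_top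
          (by simp [ENNReal.pow_ne_top, ENNReal.inv_ne_top])
    have hρ_pos : ∀ n, 0 < ρ n := by
      intro n
      refine lt_of_lt_of_le ?_ le_add_self
      exact ENNReal.mul_pos hδ'.ne' (by simp)
    have hρ_le : ∀ n, ρ n ≤ 2 * ENNReal.ofReal δ := by
      intro n
      rw [two_mul]
      refine add_le_add (ht_diam n) ?_
      calc ENNReal.ofReal δ * 2⁻¹ ^ (n + 1) ≤ ENNReal.ofReal δ * 1 := by
            refine mul_le_mul_right ?_ _
            exact pow_le_one' (by simp [ENNReal.inv_le_one]) _
        _ = ENNReal.ofReal δ := mul_one _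
    have hgeom : ∑' n : ℕ, (2⁻¹ : ℝ≥0∞) ^ (n + 1) ≤ 1 := by
      have : ∑' n : ℕ, (2⁻¹ : ℝ≥0∞) ^ (n + 1) = (∑' n : ℕ, (2⁻¹ : ℝ≥0∞) ^ n) * 2⁻¹ := by
        simp_rw [pow_succ]
        exact ENNReal.tsum_mul_right
      rw [this, ENNReal.tsum_geometric]
      simp [ENNReal.one_sub_inv_two]
    have hρ_sum : ∑' n, ρ n ≤ M + 2 * ENNReal.ofReal δ := by
      rw [hρdef, ENNReal.tsum_add, ENNReal.tsum_mul_left]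
      calc ∑' n, EMetric.diam (t n) + ENNReal.ofReal δ * ∑' n : ℕ, (2⁻¹:ℝ≥0∞) ^ (n+1)
          ≤ (M + ENNReal.ofReal δ) + ENNReal.ofReal δ * 1 :=
            add_le_add hDsum (mul_le_mul_right hgeom _)
        _ = M + 2 * ENNReal.ofReal δ := by ring
    have hsub : (⋃ p ∈ segment ℝ a b, (fun x => p + x) '' E) ⊆
        ⋃ n, ⋃ p ∈ segment ℝ a b, (fun x => p + x) '' (t n) := by
      rintro z hz
      simp only [Set.mem_iUnion, Set.mem_image] at hz ⊢
      obtain ⟨p, hp, x, hx, rfl⟩ := hz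
      obtain ⟨n, hn⟩ := Set.mem_iUnion.1 (ht_cov hx)
      exact ⟨n, p, hp, x, hn, rfl⟩
    calc volume (⋃ p ∈ segment ℝ a b, (fun x => p + x) '' E)
        ≤ ∑' n, volume (⋃ p ∈ segment ℝ a b, (fun x => p + x) '' (t n)) :=
          (measure_mono hsub).trans (measure_iUnion_le _)
      _ ≤ ∑' n, 16 * ρ n * (Ke + 4 * ENNReal.ofReal δ) := by
          refine ENNReal.tsum_le_tsum fun n => ?_
          have hrpos : 0 < (ρ n).toReal :=
            ENNReal.toReal_pos (hρ_pos n).ne' (hρ_top n)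
          have hofr : ENNReal.ofReal ((ρ n).toReal) = ρ n :=
            ENNReal.ofReal_toReal (hρ_top n)
          have hdn : EMetric.diam (t n) ≤ ENNReal.ofReal ((ρ n).toReal) := by
            rw [hofr]; exact le_self_add
          refine (sweep_piece (t n) a b ((ρ n).toReal) hrpos hdn).trans ?_
          rw [hofr]
          refine mul_le_mul_right (add_le_add le_rfl ?_) _
          calc 2 * ρ n ≤ 2 * (2 * ENNReal.ofReal δ) := mul_le_mul_right (hρ_le n) _
            _ = 4 * ENNReal.ofReal δ := by ring
      _ = 16 * (∑' n, ρ n) * (Ke + 4 * ENNReal.ofReal δ) := by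
          rw [ENNReal.tsum_mul_right, ENNReal.tsum_mul_left]
      _ ≤ 16 * (M + 2 * ENNReal.ofReal δ) * (Ke + 4 * ENNReal.ofReal δ) :=
          mul_le_mul' (mul_le_mul_right hρ_sum _) le_rfl
      _ ≤ 128 * (M + ENNReal.ofReal δ) * (Ke + ENNReal.ofReal δ) := by
          have h1 : M + 2 * ENNReal.ofReal δ ≤ 2 * (M + ENNReal.ofReal δ) := by
            have he : (2:ℝ≥0∞) * (M + ENNReal.ofReal δ) = M + 2 * ENNReal.ofReal δ + M := by ring
            rw [he]; exact le_self_add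
          have h2 : Ke + 4 * ENNReal.ofReal δ ≤ 4 * (Ke + ENNReal.ofReal δ) := by
            calc Ke + 4 * ENNReal.ofReal δ ≤ 4 * Ke + 4 * ENNReal.ofReal δ := by
                  refine add_le_add ?_ le_rfl
                  calc Ke = 1 * Ke := (one_mul _).symm
                    _ ≤ 4 * Ke := mul_le_mul' (by norm_num) le_rfl
              _ = 4 * (Ke + ENNReal.ofReal δ) := by ring
          calc 16 * (M + 2 * ENNReal.ofReal δ) * (Ke + 4 * ENNReal.ofReal δ)
              ≤ 16 * (2 * (M + ENNReal.ofReal δ)) * (4 * (Ke + ENNReal.ofReal δ)) :=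
                mul_le_mul' (mul_le_mul_right h1 _) h2
            _ = 128 * (M + ENNReal.ofReal δ) * (Ke + ENNReal.ofReal δ) := by ring
  have h1 : Tendsto (fun δ : ℝ => ENNReal.ofReal δ) (nhdsWithin 0 (Set.Ioi 0)) (nhds 0) := by
    have := ENNReal.continuous_ofReal.tendsto 0
    simpa using this.mono_left nhdsWithin_le_nhds
  have h2 : Tendsto (fun δ : ℝ => M + ENNReal.ofReal δ) (nhdsWithin 0 (Set.Ioi 0)) (nhds M) := by
    simpa using tendsto_const_nhds.add h1
  have h3 : Tendsto (fun δ : ℝ => Ke + ENNReal.ofReal δ) (nhdsWithin 0 (Set.Ioi 0)) (nhds Ke) := by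
    simpa using tendsto_const_nhds.add h1
  have h4 : Tendsto (fun δ : ℝ => 128 * (M + ENNReal.ofReal δ)) (nhdsWithin 0 (Set.Ioi 0))
      (nhds (128 * M)) :=
    ENNReal.Tendsto.const_mul h2 (Or.inr (by norm_num))
  have h5 : Tendsto (fun δ : ℝ => 128 * (M + ENNReal.ofReal δ) * (Ke + ENNReal.ofReal δ))
      (nhdsWithin 0 (Set.Ioi 0)) (nhds (128 * M * Ke)) :=
    ENNReal.Tendsto.mul h4 (Or.inr hKe) h3 (Or.inr (ENNReal.mul_ne_top (by norm_num) hE))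
  exact ge_of_tendsto h5 (Filter.eventually_of_mem self_mem_nhdsWithin fun δ hδ => key δ hδ)
end

section
/- Let f : ℝ → ℝ be Lipschitz with Lipschitz constant at most δ, let R be a subset of the graph of f (i.e., R ⊆ {(x, f(x)) : x ∈ ℝ}) with H¹(R) < ∞, and let v = (|v|, 0) be a horizontal vector. Then the Lebesgue measure of ⋃_{t ∈ [0,1]} (t·v + R) is at most C · δ · H¹(R) · |v| for an absolute constant C > 0. -/
open MeasureTheory Set ENNReal
open Topology Filter

lemma volume_reProdIm_aux (a b c d : ℝ) :
    volume (Set.Icc a b ×ℂ Set.Icc c d) = ENNReal.ofReal (b - a) * ENNReal.ofReal (d - c) := by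
  have h : Set.Icc a b ×ℂ Set.Icc c d =
      Complex.measurableEquivRealProd ⁻¹' (Set.Icc a b ×ˢ Set.Icc c d) := by
    ext z
    simp only [Complex.mem_reProdIm, Set.mem_preimage, Complex.measurableEquivRealProd_apply,
      Set.mem_prod]
  rw [h, Complex.volume_preserving_equiv_real_prod.measure_preimage
      ((measurableSet_Icc.prod measurableSet_Icc).nullMeasurableSet),
    Measure.volume_eq_prod, Measure.prod_prod, Real.volume_Icc, Real.volume_Icc]

/-- If `f : ℝ → ℝ` is Lipschitz with constant at most `δ`, `R` is a subset of the graph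
of `f` with finite `H¹` measure, and `v` is a horizontal vector, then translating `R`
along the segment from `0` to `v` sweeps out area at most `C · δ · H¹(R) · |v|`. -/
theorem graph_translation_sweep_bound :
    ∃ C : ℝ, 0 < C ∧
      ∀ (δ : NNReal) (f : ℝ → ℝ), LipschitzWith δ f →
        ∀ R : Set ℂ, R ⊆ {z : ℂ | z.im = f z.re} → μH[1] R ≠ ⊤ →
          ∀ v : ℝ,
            volume (⋃ t ∈ Set.Icc (0:ℝ) 1, (fun z => (t * v : ℂ) + z) '' R) ≤
              ENNReal.ofReal (C * δ * |v|) * μH[1] R := by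
  refine ⟨4, by norm_num, ?_⟩
  intro δ f hf R hR hfin v
  have key : ∀ r : ℝ, 0 < r →
      volume (⋃ t ∈ Set.Icc (0:ℝ) 1, (fun z => (t * v : ℂ) + z) '' R) ≤
        (2 * ENNReal.ofReal r + ENNReal.ofReal (2 * |v|)) *
          ((2 * (δ : ℝ≥0∞)) * (μH[1] R + ENNReal.ofReal r)) := by
    intro r hr
    -- obtain a good cover
    have hinf : (⨅ (t : ℕ → Set ℂ) (_ : R ⊆ ⋃ n, t n)
        (_ : ∀ n, EMetric.diam (t n) ≤ ENNReal.ofReal r),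
        ∑' n, ⨆ _ : (t n).Nonempty, EMetric.diam (t n) ^ (1:ℝ)) ≤ μH[1] R := by
      rw [MeasureTheory.Measure.hausdorffMeasure_apply]
      exact le_iSup₂ (f := fun (r' : ℝ≥0∞) (_ : 0 < r') =>
        ⨅ (t : ℕ → Set ℂ) (_ : R ⊆ ⋃ n, t n) (_ : ∀ n, EMetric.diam (t n) ≤ r'),
          ∑' n, ⨆ _ : (t n).Nonempty, EMetric.diam (t n) ^ (1:ℝ))
        (ENNReal.ofReal r) (ENNReal.ofReal_pos.2 hr)
    have hlt : (⨅ (t : ℕ → Set ℂ) (_ : R ⊆ ⋃ n, t n)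
        (_ : ∀ n, EMetric.diam (t n) ≤ ENNReal.ofReal r),
        ∑' n, ⨆ _ : (t n).Nonempty, EMetric.diam (t n) ^ (1:ℝ)) < μH[1] R + ENNReal.ofReal r :=
      lt_of_le_of_lt hinf
        (ENNReal.lt_add_right hfin (by simpa using (ENNReal.ofReal_pos.2 hr).ne'))
    rw [iInf_lt_iff] at hlt
    obtain ⟨t, hlt⟩ := hlt
    rw [iInf_lt_iff] at hlt
    obtain ⟨htcov, hlt⟩ := hlt
    rw [iInf_lt_iff] at hlt
    obtain ⟨htdiam, hsum⟩ := hlt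
    simp only [ENNReal.rpow_one] at hsum
    set B : ℕ → ℝ≥0∞ := fun n => ⨆ _ : (t n).Nonempty, EMetric.diam (t n) with hB
    set S : ℕ → Set ℂ :=
      fun n => ⋃ s ∈ Set.Icc (0:ℝ) 1, (fun z => (s * v : ℂ) + z) '' (R ∩ t n) with hS
    have hSsub : (⋃ s ∈ Set.Icc (0:ℝ) 1, (fun z => (s * v : ℂ) + z) '' R) ⊆ ⋃ n, S n := by
      intro w hw
      simp only [mem_iUnion, mem_image, hS] at hw ⊢
      obtain ⟨s, hs, z, hz, rfl⟩ := hw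
      obtain ⟨n, hn⟩ := mem_iUnion.1 (htcov hz)
      exact ⟨n, s, hs, z, ⟨hz, hn⟩, rfl⟩
    have hpiece : ∀ n, volume (S n) ≤
        (2 * ENNReal.ofReal r + ENNReal.ofReal (2 * |v|)) * ((2 * (δ : ℝ≥0∞)) * B n) := by
      intro n
      rcases (R ∩ t n).eq_empty_or_nonempty with he | ⟨z₀, hz₀R, hz₀t⟩
      · have hSe : S n = ∅ := by
          simp only [hS, he]
          simp only [Set.image_empty, Set.iUnion_empty]
        simp [hSe]
      · have hDfin : EMetric.diam (t n) ≠ ⊤ :=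
          (lt_of_le_of_lt (htdiam n) ENNReal.ofReal_lt_top).ne
        set d : ℝ := (EMetric.diam (t n)).toReal with hd
        have hd0 : 0 ≤ d := ENNReal.toReal_nonneg
        have hbox : S n ⊆ Set.Icc (z₀.re - (d + |v|)) (z₀.re + (d + |v|)) ×ℂ
            Set.Icc (z₀.im - δ * d) (z₀.im + δ * d) := by
          rintro w hw
          simp only [hS, mem_iUnion, mem_image] at hw
          obtain ⟨s, hs, z, ⟨hzR, hzt⟩, rfl⟩ := hw
          have hdist : dist z z₀ ≤ d := by
            rw [dist_edist, hd]
            exact ENNReal.toReal_mono hDfin (EMetric.edist_le_diam_of_mem hzt hz₀t)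
          have hre : |z.re - z₀.re| ≤ d := by
            have h1 : |(z - z₀).re| ≤ ‖z - z₀‖ := Complex.abs_re_le_norm _
            rw [Complex.sub_re] at h1
            rw [Complex.dist_eq] at hdist
            linarith
          have him : |z.im - z₀.im| ≤ (δ : ℝ) * d := by
            have hz1 : z.im = f z.re := hR hzR
            have hz2 : z₀.im = f z₀.re := hR hz₀R
            have := hf.dist_le_mul z.re z₀.re
            rw [Real.dist_eq, Real.dist_eq] at this
            have h2 : (δ : ℝ) * |z.re - z₀.re| ≤ (δ : ℝ) * d :=
              mul_le_mul_of_nonneg_left hre δ.coe_nonneg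
            rw [hz1, hz2]
            linarith
          have hsv : |s * v| ≤ |v| := by
            rw [abs_mul]
            have : |s| ≤ 1 := by rw [abs_of_nonneg hs.1]; exact hs.2
            nlinarith [abs_nonneg v]
          rw [Complex.mem_reProdIm]
          constructor
          · simp only [Complex.add_re, Complex.mul_re, Complex.ofReal_re, Complex.ofReal_im,
              mem_Icc]
            have h3 := abs_le.1 hre
            have h4 := abs_le.1 hsv
            constructor <;> nlinarith
          · simp only [Complex.add_im, Complex.mul_im, Complex.ofReal_re, Complex.ofReal_im,
              mem_Icc]
            have h3 := abs_le.1 him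
            constructor <;> nlinarith
        have hBn : B n = EMetric.diam (t n) := by
          rw [hB]
          exact iSup_pos ⟨z₀, hz₀t⟩
        calc volume (S n) ≤ volume (Set.Icc (z₀.re - (d + |v|)) (z₀.re + (d + |v|)) ×ℂ
              Set.Icc (z₀.im - δ * d) (z₀.im + δ * d)) := measure_mono hbox
          _ = ENNReal.ofReal (2 * d + 2 * |v|) * ENNReal.ofReal (2 * ((δ : ℝ) * d)) := by
              rw [volume_reProdIm_aux]; congr 1 <;> ring_nf
          _ ≤ (2 * ENNReal.ofReal r + ENNReal.ofReal (2 * |v|)) *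
              ((2 * (δ : ℝ≥0∞)) * B n) := by
              have hdr : d ≤ r := by
                have := ENNReal.toReal_mono ENNReal.ofReal_ne_top (htdiam n)
                rwa [ENNReal.toReal_ofReal hr.le] at this
              have e1 : ENNReal.ofReal (2 * d + 2 * |v|) ≤
                  2 * ENNReal.ofReal r + ENNReal.ofReal (2 * |v|) := by
                calc ENNReal.ofReal (2 * d + 2 * |v|)
                    ≤ ENNReal.ofReal (2 * r + 2 * |v|) :=
                      ENNReal.ofReal_le_ofReal (by linarith)
                  _ = ENNReal.ofReal (2 * r) + ENNReal.ofReal (2 * |v|) :=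
                      ENNReal.ofReal_add (by positivity) (by positivity)
                  _ = 2 * ENNReal.ofReal r + ENNReal.ofReal (2 * |v|) := by
                      rw [ENNReal.ofReal_mul (by norm_num : (0:ℝ) ≤ 2), ENNReal.ofReal_ofNat]
              have e2 : ENNReal.ofReal (2 * ((δ : ℝ) * d)) = (2 * (δ : ℝ≥0∞)) * B n := by
                rw [ENNReal.ofReal_mul (by norm_num : (0:ℝ) ≤ 2),
                  ENNReal.ofReal_mul δ.coe_nonneg, hBn, hd, ENNReal.ofReal_toReal hDfin,
                  ENNReal.ofReal_ofNat, ENNReal.ofReal_coe_nnreal, mul_assoc]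
              rw [e2]
              exact mul_le_mul' e1 le_rfl
    calc volume (⋃ s ∈ Set.Icc (0:ℝ) 1, (fun z => (s * v : ℂ) + z) '' R)
        ≤ volume (⋃ n, S n) := measure_mono hSsub
      _ ≤ ∑' n, volume (S n) := measure_iUnion_le S
      _ ≤ ∑' n, (2 * ENNReal.ofReal r + ENNReal.ofReal (2 * |v|)) *
            ((2 * (δ : ℝ≥0∞)) * B n) := ENNReal.tsum_le_tsum hpiece
      _ = (2 * ENNReal.ofReal r + ENNReal.ofReal (2 * |v|)) *
            ((2 * (δ : ℝ≥0∞)) * ∑' n, B n) := by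
          rw [ENNReal.tsum_mul_left, ENNReal.tsum_mul_left]
      _ ≤ (2 * ENNReal.ofReal r + ENNReal.ofReal (2 * |v|)) *
            ((2 * (δ : ℝ≥0∞)) * (μH[1] R + ENNReal.ofReal r)) := by
          exact mul_le_mul' le_rfl (mul_le_mul' le_rfl hsum.le)
  -- limiting argument
  have h0 : Filter.Tendsto (fun r : ℝ => ENNReal.ofReal r)
      (nhdsWithin 0 (Set.Ioi 0)) (𝓝 0) := by
    exact (ENNReal.continuous_ofReal.tendsto' 0 0 (by simp)).mono_left nhdsWithin_le_nhds
  have hg1 : Filter.Tendsto (fun r : ℝ => 2 * ENNReal.ofReal r + ENNReal.ofReal (2 * |v|))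
      (nhdsWithin 0 (Set.Ioi 0)) (𝓝 (ENNReal.ofReal (2 * |v|))) := by
    have h1 : Filter.Tendsto (fun r : ℝ => 2 * ENNReal.ofReal r + ENNReal.ofReal (2 * |v|))
        (nhdsWithin 0 (Set.Ioi 0)) (𝓝 (2 * 0 + ENNReal.ofReal (2 * |v|))) :=
      (ENNReal.Tendsto.const_mul h0 (Or.inr ENNReal.ofNat_ne_top)).add tendsto_const_nhds
    rw [mul_zero, zero_add] at h1
    exact h1
  have hg2 : Filter.Tendsto
      (fun r : ℝ => (2 * (δ : ℝ≥0∞)) * (μH[1] R + ENNReal.ofReal r))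
      (nhdsWithin 0 (Set.Ioi 0)) (𝓝 ((2 * (δ : ℝ≥0∞)) * μH[1] R)) := by
    have h2 : Filter.Tendsto (fun r : ℝ => μH[1] R + ENNReal.ofReal r)
        (nhdsWithin 0 (Set.Ioi 0)) (𝓝 (μH[1] R)) := by
      simpa using (tendsto_const_nhds (x := μH[1] R)).add h0
    exact ENNReal.Tendsto.const_mul h2
      (Or.inr (ENNReal.mul_ne_top (by simp) ENNReal.coe_ne_top))
  have hmul : Filter.Tendsto
      (fun r : ℝ => (2 * ENNReal.ofReal r + ENNReal.ofReal (2 * |v|)) *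
        ((2 * (δ : ℝ≥0∞)) * (μH[1] R + ENNReal.ofReal r)))
      (nhdsWithin 0 (Set.Ioi 0))
      (𝓝 (ENNReal.ofReal (2 * |v|) * ((2 * (δ : ℝ≥0∞)) * μH[1] R))) := by
    apply ENNReal.Tendsto.mul hg1 ?_ hg2 ?_
    · exact Or.inr (ENNReal.mul_ne_top (ENNReal.mul_ne_top (by simp) ENNReal.coe_ne_top) hfin)
    · exact Or.inr ENNReal.ofReal_ne_top
  have hle : volume (⋃ t ∈ Set.Icc (0:ℝ) 1, (fun z => (t * v : ℂ) + z) '' R) ≤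
      ENNReal.ofReal (2 * |v|) * ((2 * (δ : ℝ≥0∞)) * μH[1] R) :=
    ge_of_tendsto hmul (Filter.eventually_of_mem self_mem_nhdsWithin fun r hr => key r hr)
  have heq : ENNReal.ofReal (4 * (δ : ℝ) * |v|) * μH[1] R =
      ENNReal.ofReal (2 * |v|) * ((2 * (δ : ℝ≥0∞)) * μH[1] R) := by
    rw [show (4 : ℝ) * (δ : ℝ) * |v| = (2 * |v|) * (2 * (δ : ℝ)) by ring,
      ENNReal.ofReal_mul (by positivity), ENNReal.ofReal_mul (by norm_num : (0:ℝ) ≤ 2),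
      ENNReal.ofReal_mul (by norm_num : (0:ℝ) ≤ 2),
      ENNReal.ofReal_ofNat, ENNReal.ofReal_coe_nnreal]
    ring
  rw [heq]
  exact hle
end

section
/- Let x_j = (w_j, φ_j) ∈ ℝ³ \ {0} for j = 1, 2, 3 with x₃ = x₁ ⋆ x₂ and |φ_j| ≤ 1 for each j. Then |w₁ + w₂ − w₃| ≤ C·(|w₂||φ₁| + |w₁||φ₁| + |w₂||φ₂| + |w₃||φ₃|) for an absolute constant C > 0. -/
/-- For `x = (w, φ)`, the displacement of the origin: `v = w(1 − e^{iφ})/φ` if `φ ≠ 0`,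
`v = −i w` if `φ = 0`. -/
noncomputable def vOf (x : ℂ × ℝ) : ℂ :=
  if x.2 = 0 then -Complex.I * x.1
  else x.1 * (1 - Complex.exp (x.2 * Complex.I)) / (x.2 : ℂ)

/-- The relation `x₃ = x₁ ⋆ x₂`: angles add, and `v₁ + e^{iφ₁} v₂ = v₃`. -/
def starRel (x y z : ℂ × ℝ) : Prop :=
  z.2 = x.2 + y.2 ∧ vOf x + Complex.exp (x.2 * Complex.I) * vOf y = vOf z

lemma vOf_bound (w : ℂ) (φ : ℝ) (h : |φ| ≤ 1) :
    ‖vOf (w, φ) + Complex.I * w‖ ≤ ‖w‖ * |φ| := by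
  unfold vOf
  by_cases hφ : φ = 0
  · simp [hφ]
  · simp only [if_neg hφ]
    have hz : ‖(φ : ℂ) * Complex.I‖ ≤ 1 := by simpa using h
    have hb := Complex.norm_exp_sub_one_sub_id_le hz
    have hkey : w * (1 - Complex.exp ((φ : ℂ) * Complex.I)) / (φ : ℂ) + Complex.I * w
        = -(w / (φ : ℂ)) * (Complex.exp ((φ : ℂ) * Complex.I) - 1 - (φ : ℂ) * Complex.I) := by
      have hφ' : (φ : ℂ) ≠ 0 := by exact_mod_cast hφ
      field_simp
      ring
    rw [hkey]
    have h1 : ‖-(w / (φ : ℂ))‖ = ‖w‖ / |φ| := by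
      simp [norm_div, Complex.norm_real]
    rw [norm_mul, h1]
    have habs : ‖(φ : ℂ) * Complex.I‖ = |φ| := by simp
    have hb' : ‖Complex.exp ((φ : ℂ) * Complex.I) - 1 - (φ : ℂ) * Complex.I‖ ≤ |φ| ^ 2 := by
      simpa [habs] using hb
    have hφpos : 0 < |φ| := abs_pos.mpr hφ
    calc ‖w‖ / |φ| * ‖Complex.exp ((φ : ℂ) * Complex.I) - 1 - (φ : ℂ) * Complex.I‖
        ≤ ‖w‖ / |φ| * |φ| ^ 2 := by
          exact mul_le_mul_of_nonneg_left hb' (by positivity)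
      _ = ‖w‖ * |φ| := by field_simp

/-- If `x₃ = x₁ ⋆ x₂` with all `x_j = (w_j, φ_j) ≠ 0` and `|φ_j| ≤ 1`, then
`|w₁ + w₂ − w₃| ≤ C (|w₂||φ₁| + |w₁||φ₁| + |w₂||φ₂| + |w₃||φ₃|)` for an absolute
constant `C > 0`; i.e., `⋆` is close to coordinatewise addition for small angles. -/
theorem star_approx_add :
    ∃ C : ℝ, 0 < C ∧
      ∀ (w₁ w₂ w₃ : ℂ) (φ₁ φ₂ φ₃ : ℝ),
        (w₁, φ₁) ≠ (0 : ℂ × ℝ) → (w₂, φ₂) ≠ (0 : ℂ × ℝ) → (w₃, φ₃) ≠ (0 : ℂ × ℝ) →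
        starRel (w₁, φ₁) (w₂, φ₂) (w₃, φ₃) →
        |φ₁| ≤ 1 → |φ₂| ≤ 1 → |φ₃| ≤ 1 →
        ‖w₁ + w₂ - w₃‖ ≤
          C * (‖w₂‖ * |φ₁| + ‖w₁‖ * |φ₁| + ‖w₂‖ * |φ₂| + ‖w₃‖ * |φ₃|) := by
  refine ⟨2, by norm_num, ?_⟩
  intro w₁ w₂ w₃ φ₁ φ₂ φ₃ _ _ _ hrel h1 h2 h3
  obtain ⟨hφ, hv⟩ := hrel
  set e := Complex.exp ((φ₁ : ℂ) * Complex.I) with he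
  set d₁ := vOf (w₁, φ₁) + Complex.I * w₁ with hd₁
  set d₂ := vOf (w₂, φ₂) + Complex.I * w₂ with hd₂
  set d₃ := vOf (w₃, φ₃) + Complex.I * w₃ with hd₃
  have key : w₁ + w₂ - w₃ =
      Complex.I * (d₃ - d₁ - e * d₂ + Complex.I * (e - 1) * w₂) := by
    rw [hd₁, hd₂, hd₃]
    have hI : Complex.I * Complex.I = -1 := Complex.I_mul_I
    linear_combination Complex.I * hv + (w₁ + w₂ - w₃) * Complex.I_sq
  have hne : ‖e‖ = 1 := by
    rw [he]
    exact Complex.norm_exp_ofReal_mul_I φ₁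
  have hb1 : ‖d₁‖ ≤ ‖w₁‖ * |φ₁| := vOf_bound w₁ φ₁ h1
  have hb2 : ‖d₂‖ ≤ ‖w₂‖ * |φ₂| := vOf_bound w₂ φ₂ h2
  have hb3 : ‖d₃‖ ≤ ‖w₃‖ * |φ₃| := vOf_bound w₃ φ₃ h3
  have hbe : ‖e - 1‖ ≤ 2 * |φ₁| := by
    have hz : ‖(φ₁ : ℂ) * Complex.I‖ ≤ 1 := by simpa using h1
    have := Complex.norm_exp_sub_one_le hz
    simpa [he] using this
  have : ‖w₁ + w₂ - w₃‖ ≤ ‖d₃‖ + ‖d₁‖ + ‖e‖ * ‖d₂‖ + ‖e - 1‖ * ‖w₂‖ := by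
    rw [key, norm_mul, Complex.norm_I, one_mul]
    calc ‖d₃ - d₁ - e * d₂ + Complex.I * (e - 1) * w₂‖
        ≤ ‖d₃ - d₁ - e * d₂‖ + ‖Complex.I * (e - 1) * w₂‖ := norm_add_le _ _
      _ ≤ (‖d₃ - d₁‖ + ‖e * d₂‖) + ‖Complex.I * (e - 1) * w₂‖ := by
          gcongr; exact norm_sub_le _ _
      _ ≤ ((‖d₃‖ + ‖d₁‖) + ‖e * d₂‖) + ‖Complex.I * (e - 1) * w₂‖ := by
          gcongr; exact norm_sub_le _ _
      _ = ‖d₃‖ + ‖d₁‖ + ‖e‖ * ‖d₂‖ + ‖e - 1‖ * ‖w₂‖ := by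
          rw [norm_mul, norm_mul, norm_mul, Complex.norm_I, one_mul]
  calc ‖w₁ + w₂ - w₃‖ ≤ ‖d₃‖ + ‖d₁‖ + ‖e‖ * ‖d₂‖ + ‖e - 1‖ * ‖w₂‖ := this
    _ ≤ ‖w₃‖ * |φ₃| + ‖w₁‖ * |φ₁| + 1 * (‖w₂‖ * |φ₂|) + (2 * |φ₁|) * ‖w₂‖ := by
        gcongr <;> simp [hne]
    _ ≤ 2 * (‖w₂‖ * |φ₁| + ‖w₁‖ * |φ₁| + ‖w₂‖ * |φ₂| + ‖w₃‖ * |φ₃|) := by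
        nlinarith [norm_nonneg w₁, norm_nonneg w₂, norm_nonneg w₃, abs_nonneg φ₁, abs_nonneg φ₂, abs_nonneg φ₃]
end

section
/- Let x, x₀, x₁ ∈ ℝ³ \ {0} with x = x₀ + x₁ (coordinatewise addition). For each N, let y₀ = x₀/N and define ỹ₁ by the equation y₀ ⋆ ỹ₁ = x/N, and set x̃₁ = N·ỹ₁. Then x̃₁ → x₁ as N → ∞; in particular, for every ε > 0 there exists N₀ such that for all N ≥ N₀, |x̃₁ − x₁| < ε and |y₀| < ε and |ỹ₁| < ε. -/
open Filter Topology

/-- The auxiliary function `g(φ) = (1 - e^{iφ})/φ` (with `g(0) = -i`), so that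
`vOf (w, φ) = w * g φ`. -/
noncomputable def gg (φ : ℝ) : ℂ :=
  if φ = 0 then -Complex.I else (1 - Complex.exp ((φ : ℂ) * Complex.I)) / (φ : ℂ)

lemma vOf_eq (z : ℂ × ℝ) : vOf z = z.1 * gg z.2 := by
  unfold vOf gg
  split_ifs with h
  · ring
  · rw [mul_div_assoc]

lemma gg_ne_zero (φ : ℝ) (h : |φ| < 1) : gg φ ≠ 0 := by
  unfold gg
  split_ifs with h0
  · simpa using Complex.I_ne_zero
  · apply div_ne_zero
    · intro hc
      have he : Complex.exp (φ * Complex.I) = 1 := by linear_combination -hc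
      rw [Complex.exp_eq_one_iff] at he
      obtain ⟨n, hn⟩ := he
      have h2 : (φ:ℂ) = (((n:ℝ) * (2*Real.pi) : ℝ) : ℂ) :=
        mul_right_cancel₀ Complex.I_ne_zero (by push_cast at hn ⊢; linear_combination hn)
      have h3 : φ = (n:ℝ) * (2*Real.pi) := by exact_mod_cast h2
      rcases eq_or_ne n 0 with rfl | hn0
      · simp at h3; exact h0 h3
      · have h4 : (1:ℝ) ≤ |(n:ℝ)| := by
          have := Int.one_le_abs hn0
          exact_mod_cast this
        have h5 : |φ| = |(n:ℝ)| * (2*Real.pi) := by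
          rw [h3, abs_mul]
          congr 1
          rw [abs_of_pos]; positivity
        nlinarith [Real.pi_gt_three]
    · exact Complex.ofReal_ne_zero.mpr h0

lemma gg_tendsto : Tendsto gg (𝓝[≠] (0:ℝ)) (𝓝 (-Complex.I)) := by
  have hd : HasDerivAt (fun t : ℝ => Complex.exp (t * Complex.I)) Complex.I 0 := by
    have h1 : HasDerivAt (fun z : ℂ => Complex.exp (z * Complex.I))
        (Complex.exp ((0:ℂ) * Complex.I) * Complex.I) 0 :=
      (hasDerivAt_mul_const Complex.I).cexp
    have h2 := h1.comp_ofReal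
    simpa using h2
  have hs := hasDerivAt_iff_tendsto_slope.mp hd
  have hneg : Tendsto (fun φ : ℝ =>
      -(slope (fun t : ℝ => Complex.exp (t * Complex.I)) 0 φ)) (𝓝[≠] 0) (𝓝 (-Complex.I)) := hs.neg
  refine hneg.congr' ?_
  filter_upwards [self_mem_nhdsWithin] with φ hφ
  simp only [Set.mem_compl_iff, Set.mem_singleton_iff] at hφ
  simp only [slope, sub_zero, vsub_eq_sub, Complex.ofReal_zero, zero_mul, Complex.exp_zero,
    Complex.real_smul, Complex.ofReal_inv]
  unfold gg
  rw [if_neg hφ, div_eq_mul_inv]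
  ring

lemma gg_seq (c : ℝ) : Tendsto (fun N : ℕ => gg (c / N)) atTop (𝓝 (-Complex.I)) := by
  rcases eq_or_ne c 0 with rfl | hc
  · simpa [gg] using (tendsto_const_nhds : Tendsto (fun _ : ℕ => -Complex.I) atTop _)
  · apply gg_tendsto.comp
    rw [tendsto_nhdsWithin_iff]
    constructor
    · exact tendsto_const_div_atTop_nhds_zero_nat c
    · filter_upwards [eventually_ge_atTop 1] with N hN
      have hN0 : (N:ℝ) ≠ 0 := Nat.cast_ne_zero.mpr (by omega)
      simpa using div_ne_zero hc hN0

lemma hexp_tendsto (c : ℝ) :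
    Tendsto (fun N : ℕ => Complex.exp ((c / N : ℝ) * Complex.I)) atTop (𝓝 1) := by
  have hc : Continuous fun t : ℝ => Complex.exp (t * Complex.I) := by continuity
  have := (hc.tendsto 0).comp (tendsto_const_div_atTop_nhds_zero_nat c)
  simpa [Function.comp_def, Complex.ofReal_div] using this

lemma key (x x₀ x₁ : ℂ × ℝ) (hadd : x = x₀ + x₁) (N : ℕ) (hN : 1 ≤ N)
    (hg : gg (x₁.2 / N) ≠ 0) (ty₁ : ℂ × ℝ)
    (h : starRel (((N : ℝ)⁻¹) • x₀) ty₁ (((N : ℝ)⁻¹) • x)) :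
    (N : ℝ) • ty₁ = ((x.1 * gg (x.2 / N) - x₀.1 * gg (x₀.2 / N)) /
      (Complex.exp ((x₀.2 / N : ℝ) * Complex.I) * gg (x₁.2 / N)), x₁.2) := by
  have hNR : (N:ℝ) ≠ 0 := Nat.cast_ne_zero.mpr (by omega)
  have hNC : (N:ℂ) ≠ 0 := Nat.cast_ne_zero.mpr (by omega)
  have hadd1 : x.1 = x₀.1 + x₁.1 := by rw [hadd]; rfl
  have hadd2 : x.2 = x₀.2 + x₁.2 := by rw [hadd]; rfl
  obtain ⟨h1, h2⟩ := h
  simp only [Prod.smul_snd, smul_eq_mul] at h1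
  have hty2 : ty₁.2 = x₁.2 / N := by
    rw [hadd2] at h1; field_simp at h1 ⊢; linarith
  simp only [vOf_eq, Prod.smul_fst, Prod.smul_snd, smul_eq_mul, Complex.real_smul, hty2] at h2
  push_cast at h2
  rw [Prod.ext_iff]
  constructor
  · simp only [Prod.smul_fst, Complex.real_smul]
    push_cast
    rw [eq_div_iff (mul_ne_zero (Complex.exp_ne_zero _) hg)]
    rw [div_eq_inv_mul x.2, div_eq_inv_mul x₀.2, div_eq_inv_mul x₁.2] at *
    field_simp at h2 ⊢
    linear_combination h2
  · simp only [Prod.smul_snd, smul_eq_mul, hty2]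
    field_simp

/-- Basic zigzag correction for rotations: if `x = x₀ + x₁` (coordinatewise) with
`x, x₀, x₁ ≠ 0`, `y₀ = x₀/N`, and `ty₁` satisfies `y₀ ⋆ ty₁ = x/N`, then
`x̃₁ := N ty₁ → x₁` as `N → ∞`: for every `ε > 0` there is `N₀` such that for all
`N ≥ N₀`, `|x̃₁ − x₁| < ε`, `|y₀| < ε` and `|ty₁| < ε`. -/
theorem zigzag_correction_tendsto
    (x x₀ x₁ : ℂ × ℝ) (hx : x ≠ 0) (hx₀ : x₀ ≠ 0) (hx₁ : x₁ ≠ 0)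
    (hadd : x = x₀ + x₁) :
    ∀ ε : ℝ, 0 < ε → ∃ N₀ : ℕ, ∀ N : ℕ, N₀ ≤ N →
      ∀ ty₁ : ℂ × ℝ, starRel (((N : ℝ)⁻¹) • x₀) ty₁ (((N : ℝ)⁻¹) • x) →
        ‖(N : ℝ) • ty₁ - x₁‖ < ε ∧ ‖((N : ℝ)⁻¹) • x₀‖ < ε ∧ ‖ty₁‖ < ε := by
  have hadd1 : x.1 = x₀.1 + x₁.1 := by rw [hadd]; rfl
  set T : ℕ → ℂ × ℝ := fun N =>
    ((x.1 * gg (x.2 / N) - x₀.1 * gg (x₀.2 / N)) /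
      (Complex.exp ((x₀.2 / N : ℝ) * Complex.I) * gg (x₁.2 / N)), x₁.2) with hTdef
  have hTend : Tendsto T atTop (𝓝 x₁) := by
    have hnum : Tendsto (fun N : ℕ => x.1 * gg (x.2 / N) - x₀.1 * gg (x₀.2 / N)) atTop
        (𝓝 (x.1 * -Complex.I - x₀.1 * -Complex.I)) :=
      (tendsto_const_nhds.mul (gg_seq x.2)).sub (tendsto_const_nhds.mul (gg_seq x₀.2))
    have hden : Tendsto (fun N : ℕ =>
        Complex.exp ((x₀.2 / N : ℝ) * Complex.I) * gg (x₁.2 / N)) atTop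
        (𝓝 (1 * -Complex.I)) := (hexp_tendsto x₀.2).mul (gg_seq x₁.2)
    have hden0 : (1 : ℂ) * -Complex.I ≠ 0 := by simp [Complex.I_ne_zero]
    have h1 : Tendsto (fun N : ℕ => (T N).1) atTop (𝓝 x₁.1) := by
      have hval : (x.1 * -Complex.I - x₀.1 * -Complex.I) / ((1:ℂ) * -Complex.I) = x₁.1 := by
        rw [hadd1]
        field_simp [Complex.I_ne_zero]
        ring
      have := hnum.div hden hden0
      rw [hval] at this
      exact this
    have h2 : Tendsto (fun N : ℕ => (T N).2) atTop (𝓝 x₁.2) := tendsto_const_nhds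
    exact h1.prodMk_nhds h2
  intro ε hε
  have E1 : ∀ᶠ N : ℕ in atTop, ‖T N - x₁‖ < ε := by
    have := hTend.eventually (Metric.ball_mem_nhds x₁ hε)
    filter_upwards [this] with N hN
    rw [← dist_eq_norm]
    exact Metric.mem_ball.mp hN
  have E2 : ∀ᶠ N : ℕ in atTop, ‖((N : ℝ)⁻¹) • x₀‖ < ε := by
    have h0 : Tendsto (fun N : ℕ => ‖((N : ℝ)⁻¹) • x₀‖) atTop (𝓝 0) := by
      have := tendsto_inv_atTop_nhds_zero_nat.mul_const ‖x₀‖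
      rw [zero_mul] at this
      refine this.congr fun N => ?_
      rw [norm_smul, Real.norm_eq_abs, abs_inv, Nat.abs_cast]
    exact h0.eventually_lt_const hε
  have E3 : ∀ᶠ N : ℕ in atTop, (N : ℝ)⁻¹ * ‖T N‖ < ε := by
    have h0 : Tendsto (fun N : ℕ => (N : ℝ)⁻¹ * ‖T N‖) atTop (𝓝 (0 * ‖x₁‖)) :=
      tendsto_inv_atTop_nhds_zero_nat.mul hTend.norm
    rw [zero_mul] at h0
    exact h0.eventually_lt_const hε
  have E4 : ∀ᶠ N : ℕ in atTop, 1 ≤ N := eventually_ge_atTop 1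
  have E5 : ∀ᶠ N : ℕ in atTop, |x₁.2| / N < 1 :=
    (tendsto_const_div_atTop_nhds_zero_nat |x₁.2|).eventually_lt_const zero_lt_one
  obtain ⟨N₀, hN₀⟩ := eventually_atTop.mp (E1.and (E2.and (E3.and (E4.and E5))))
  refine ⟨N₀, fun N hN ty₁ hrel => ?_⟩
  obtain ⟨e1, e2, e3, e4, e5⟩ := hN₀ N hN
  have hNR : (N:ℝ) ≠ 0 := Nat.cast_ne_zero.mpr (by omega)
  have hg : gg (x₁.2 / N) ≠ 0 := by
    apply gg_ne_zero
    rwa [abs_div, Nat.abs_cast]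
  have hkey : (N : ℝ) • ty₁ = T N := key x x₀ x₁ hadd N e4 hg ty₁ hrel
  refine ⟨by rw [hkey]; exact e1, e2, ?_⟩
  have hty : ty₁ = (N : ℝ)⁻¹ • T N := by
    rw [← hkey, inv_smul_smul₀ hNR]
  rw [hty, norm_smul, Real.norm_eq_abs, abs_inv, Nat.abs_cast]
  exact e3
end

section
/- Let r > 0 and let E ⊆ B(0, r) ⊆ ℝ² be a set of finite H¹-measure. Then there is a constant c depending only on r such that for every rotation ρ around a center z ∈ ℝ² with angle φ ≠ 0, the set swept by E under the continuous rotation from angle 0 to φ around z has Lebесgue measure at most c · H¹(E) · |φ| · √(1 + |z|²). -/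
open MeasureTheory Set ENNReal

lemma expI_lip (a b : ℝ) :
    ‖Complex.exp (a * Complex.I) - Complex.exp (b * Complex.I)‖ ≤ |a - b| := by
  have hder : ∀ t : ℝ, HasDerivAt (fun t : ℝ => Complex.exp (t * Complex.I))
      (Complex.exp (t * Complex.I) * Complex.I) t := by
    intro t
    have h1 : HasDerivAt (fun t : ℝ => (t : ℂ) * Complex.I) Complex.I t := by
      simpa using (Complex.ofRealCLM.hasDerivAt (x := t)).mul_const Complex.I
    simpa using h1.cexp
  have := Convex.norm_image_sub_le_of_norm_hasDerivWithin_le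
    (f := fun t : ℝ => Complex.exp (t * Complex.I))
    (f' := fun t : ℝ => Complex.exp (t * Complex.I) * Complex.I) (C := 1) (s := Set.univ)
    (fun x _ => (hder x).hasDerivWithinAt)
    (fun x _ => by
      rw [norm_mul, Complex.norm_exp_ofReal_mul_I,
        Complex.norm_I, one_mul])
    convex_univ (Set.mem_univ b) (Set.mem_univ a)
  simpa [Real.norm_eq_abs] using this


noncomputable def gam (x z : ℂ) (φ τ : ℝ) : ℂ :=
  Complex.exp ((τ * φ : ℝ) * Complex.I) * (x - z) + z

lemma gam_lip (x z : ℂ) (φ a b : ℝ) :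
    dist (gam x z φ a) (gam x z φ b) ≤ |φ| * ‖x - z‖ * |a - b| := by
  have : gam x z φ a - gam x z φ b
      = (Complex.exp ((a*φ:ℝ) * Complex.I) - Complex.exp ((b*φ:ℝ) * Complex.I)) * (x - z) := by
    simp [gam]; ring
  rw [dist_eq_norm, this, norm_mul]
  calc ‖Complex.exp ((a*φ:ℝ) * Complex.I) - Complex.exp ((b*φ:ℝ) * Complex.I)‖ * ‖x - z‖
      ≤ |a*φ - b*φ| * ‖x - z‖ := by
        gcongr; exact expI_lip _ _
    _ = |φ| * ‖x - z‖ * |a - b| := by rw [← sub_mul, abs_mul]; ring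

lemma sweep_ball_vol (x z : ℂ) (φ s : ℝ) (hs : 0 < s) :
    volume (⋃ τ ∈ Set.Icc (0:ℝ) 1, Metric.closedBall (gam x z φ τ) s)
      ≤ ENNReal.ofReal (16 * (|φ| * ‖x - z‖ * s + 2 * s ^ 2)) := by
  set L : ℝ := |φ| * ‖x - z‖ with hL
  have hL0 : 0 ≤ L := by positivity
  set N : ℕ := max ⌈L / s⌉₊ 1 with hN
  have hN1 : 1 ≤ N := le_max_right _ _
  have hNpos : (0:ℝ) < N := by exact_mod_cast hN1
  have hLN : L ≤ s * N := by
    have h1 : L / s ≤ (⌈L / s⌉₊ : ℝ) := Nat.le_ceil _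
    have h2 : (⌈L / s⌉₊ : ℝ) ≤ N := by exact_mod_cast le_max_left _ _
    calc L = (L / s) * s := by field_simp
      _ ≤ (N : ℝ) * s := by gcongr; exact h1.trans h2
      _ = s * N := by ring
  -- covering inclusion
  have hsub : (⋃ τ ∈ Set.Icc (0:ℝ) 1, Metric.closedBall (gam x z φ τ) s)
      ⊆ ⋃ j ∈ Finset.range (N + 1), Metric.closedBall (gam x z φ (j / N)) (2 * s) := by
    intro w hw
    simp only [Set.mem_iUnion, exists_prop] at hw
    obtain ⟨τ, ⟨hτ0, hτ1⟩, hwτ⟩ := hw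
    set j : ℕ := ⌊τ * N⌋₊ with hj
    have hjN : j ≤ N := by
      have : τ * N ≤ (N : ℝ) := by nlinarith
      calc j ≤ ⌊(N:ℝ)⌋₊ := Nat.floor_mono this
        _ = N := Nat.floor_natCast N
    have hjle : (j : ℝ) ≤ τ * N := Nat.floor_le (by positivity)
    have hjlt : τ * N < j + 1 := Nat.lt_floor_add_one _
    have habs : |τ - j / N| ≤ 1 / N := by
      rw [abs_le]
      have h1 : (j:ℝ) / N ≤ τ := by
        rw [div_le_iff₀ hNpos]; exact hjle
      have h2 : τ - (j:ℝ) / N ≤ 1 / N := by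
        rw [sub_le_iff_le_add, ← add_div, le_div_iff₀ hNpos]
        linarith
      constructor <;> [linarith [one_div_pos.mpr hNpos]; linarith]
    have hdist : dist (gam x z φ τ) (gam x z φ (j / N)) ≤ s := by
      calc dist (gam x z φ τ) (gam x z φ (j / N)) ≤ L * |τ - j / N| := gam_lip x z φ _ _
        _ ≤ (s * N) * (1 / N) := by
            apply mul_le_mul hLN habs (abs_nonneg _) (by positivity)
        _ = s := by field_simp
    simp only [Set.mem_iUnion, exists_prop]
    refine ⟨j, Finset.mem_range.2 (Nat.lt_succ_of_le hjN), ?_⟩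
    have := (Metric.mem_closedBall.1 hwτ)
    rw [Metric.mem_closedBall]
    calc dist w (gam x z φ (j / N)) ≤ dist w (gam x z φ τ) + dist (gam x z φ τ) (gam x z φ (j/N)) :=
          dist_triangle _ _ _
      _ ≤ s + s := add_le_add this hdist
      _ = 2 * s := by ring
  calc volume (⋃ τ ∈ Set.Icc (0:ℝ) 1, Metric.closedBall (gam x z φ τ) s)
      ≤ volume (⋃ j ∈ Finset.range (N + 1), Metric.closedBall (gam x z φ (j / N)) (2 * s)) :=
        measure_mono hsub
    _ ≤ ∑ j ∈ Finset.range (N + 1), volume (Metric.closedBall (gam x z φ (j / N)) (2 * s)) :=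
        measure_biUnion_finset_le _ _
    _ = (N + 1 : ℕ) * (ENNReal.ofReal (2 * s) ^ 2 * NNReal.pi) := by
        simp [Complex.volume_closedBall, Finset.sum_const]
    _ ≤ ENNReal.ofReal (16 * (L * s + 2 * s ^ 2)) := by
        have hpi : (NNReal.pi : ℝ≥0∞) = ENNReal.ofReal Real.pi :=
          ENNReal.ofReal_coe_nnreal.symm
        have hnat : ((N + 1 : ℕ) : ℝ≥0∞) = ENNReal.ofReal ((N : ℝ) + 1) := by
          rw [← ENNReal.ofReal_natCast]; norm_num
        rw [hpi, hnat, ← ENNReal.ofReal_pow (by positivity), ← ENNReal.ofReal_mul (by positivity),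
          ← ENNReal.ofReal_mul (by positivity)]
        apply ENNReal.ofReal_le_ofReal
        have hceil : (⌈L / s⌉₊ : ℝ) < L / s + 1 := Nat.ceil_lt_add_one (by positivity)
        have hNle : (N : ℝ) ≤ L / s + 1 := by
          rcases max_cases ⌈L / s⌉₊ 1 with ⟨h, _⟩ | ⟨h, _⟩ <;> rw [hN, h]
          · linarith
          · norm_num; positivity
        have hpile : Real.pi ≤ 4 := Real.pi_le_four
        have hdiv : (L / s) * s ^ 2 = L * s := by field_simp
        have hpi0 : (0:ℝ) < Real.pi := Real.pi_pos
        calc ((N:ℝ) + 1) * ((2*s)^2 * Real.pi) ≤ (L/s + 2) * ((2*s)^2 * 4) := by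
              apply mul_le_mul (by linarith) (by nlinarith) (by positivity) (by positivity)
          _ = 16 * ((L/s) * s^2 + 2 * s^2) := by ring
          _ = 16 * (L * s + 2 * s^2) := by rw [hdiv]

lemma sweep_piece_s10 (r : ℝ) (hr : 0 < r) (z : ℂ) (φ δ : ℝ) (hδ : 0 < δ) (E A : Set ℂ)
    (hE : E ⊆ Metric.ball (0 : ℂ) r) (hd : EMetric.diam A ≤ ENNReal.ofReal δ) :
    volume (⋃ τ ∈ Set.Icc (0:ℝ) 1,
        (fun u : ℂ => Complex.exp ((τ * φ : ℝ) * Complex.I) * (u - z) + z) '' (A ∩ E))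
      ≤ ENNReal.ofReal (16 * (|φ| * (r + ‖z‖) + 2 * δ)) *
          (⨆ _ : A.Nonempty, EMetric.diam A ^ (1:ℝ)) := by
  rcases Set.eq_empty_or_nonempty (A ∩ E) with hAE | ⟨x, hxA, hxE⟩
  · simp [hAE]
  have hxr : ‖x‖ < r := by simpa using hE hxE
  have hxz : ‖x - z‖ ≤ r + ‖z‖ := by
    calc ‖x - z‖ ≤ ‖x‖ + ‖z‖ := norm_sub_le _ _
      _ ≤ r + ‖z‖ := by linarith
  set L : ℝ := |φ| * ‖x - z‖ with hL
  have hL0 : 0 ≤ L := by positivity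
  -- the swept set is inside balls around the orbit of x, of any radius ≥ diam-ish
  have key : ∀ s : ℝ, Metric.diam A ≤ s →
      (⋃ τ ∈ Set.Icc (0:ℝ) 1,
        (fun u : ℂ => Complex.exp ((τ * φ : ℝ) * Complex.I) * (u - z) + z) '' (A ∩ E))
      ⊆ ⋃ τ ∈ Set.Icc (0:ℝ) 1, Metric.closedBall (gam x z φ τ) s := by
    intro s hsd w hw
    have hbd : Bornology.IsBounded A := by
      rw [Metric.isBounded_iff_ediam_ne_top]
      exact (hd.trans_lt ENNReal.ofReal_lt_top).ne
    simp only [Set.mem_iUnion, exists_prop, Set.mem_image] at hw ⊢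
    obtain ⟨τ, hτ, u, ⟨huA, _⟩, rfl⟩ := hw
    refine ⟨τ, hτ, ?_⟩
    rw [Metric.mem_closedBall]
    have : dist (Complex.exp ((τ * φ : ℝ) * Complex.I) * (u - z) + z) (gam x z φ τ)
        = dist u x := by
      rw [gam, dist_eq_norm, dist_eq_norm]
      have : Complex.exp ((τ * φ : ℝ) * Complex.I) * (u - z) + z
          - (Complex.exp ((τ * φ : ℝ) * Complex.I) * (x - z) + z)
          = Complex.exp ((τ * φ : ℝ) * Complex.I) * (u - x) := by ring
      rw [this, norm_mul,
        Complex.norm_exp_ofReal_mul_I, one_mul]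
    rw [this]
    exact (Metric.dist_le_diam_of_mem hbd huA hxA).trans hsd
  rcases eq_or_ne (EMetric.diam A) 0 with h0 | h0
  · -- diameter zero: the swept set is a nullset
    have hvol : volume (⋃ τ ∈ Set.Icc (0:ℝ) 1,
        (fun u : ℂ => Complex.exp ((τ * φ : ℝ) * Complex.I) * (u - z) + z) '' (A ∩ E)) = 0 := by
      have hdA : Metric.diam A = 0 := by have := congrArg ENNReal.toReal h0; simp only [ENNReal.toReal_zero] at this; exact this
      refine le_antisymm ?_ zero_le
      have htend : Filter.Tendsto (fun s : ℝ => ENNReal.ofReal (16 * (L * s + 2 * s ^ 2)))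
          (nhdsWithin 0 (Set.Ioi 0)) (nhds 0) := by
        have hc : Continuous fun s : ℝ => ENNReal.ofReal (16 * (L * s + 2 * s ^ 2)) :=
          ENNReal.continuous_ofReal.comp (by continuity)
        have := hc.tendsto 0
        simp only [mul_zero, zero_pow, mul_zero, add_zero, ENNReal.ofReal_zero,
          zero_pow two_ne_zero, ne_eq] at this
        norm_num at this
        norm_num; exact this.mono_left nhdsWithin_le_nhds
      refine ge_of_tendsto htend ?_
      filter_upwards [self_mem_nhdsWithin] with s hs
      exact (measure_mono (key s (hdA.le.trans (le_of_lt hs)))).trans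
        (sweep_ball_vol x z φ s hs)
    rw [hvol]
    exact zero_le
  · have hfin : EMetric.diam A ≠ ⊤ := (hd.trans_lt ENNReal.ofReal_lt_top).ne
    set s : ℝ := (EMetric.diam A).toReal with hs
    have hs0 : 0 < s := ENNReal.toReal_pos h0 hfin
    have hsδ : s ≤ δ := ENNReal.toReal_le_of_le_ofReal hδ.le hd
    have h1 : volume (⋃ τ ∈ Set.Icc (0:ℝ) 1,
        (fun u : ℂ => Complex.exp ((τ * φ : ℝ) * Complex.I) * (u - z) + z) '' (A ∩ E))
        ≤ ENNReal.ofReal (16 * (L * s + 2 * s ^ 2)) :=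
      (measure_mono (key s le_rfl)).trans (sweep_ball_vol x z φ s hs0)
    refine h1.trans ?_
    have hne : A.Nonempty := ⟨x, hxA⟩
    have hC : (0:ℝ) ≤ 16 * (|φ| * (r + ‖z‖) + 2 * δ) := by
      have := mul_nonneg (abs_nonneg φ) (add_nonneg hr.le (norm_nonneg z))
      nlinarith
    rw [iSup_pos hne, ENNReal.rpow_one, ← ENNReal.ofReal_toReal hfin, ← hs,
      ← ENNReal.ofReal_mul hC]
    apply ENNReal.ofReal_le_ofReal
    have hφ : |φ| * ‖x - z‖ ≤ |φ| * (r + ‖z‖) := by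
      apply mul_le_mul_of_nonneg_left hxz (abs_nonneg _)
    nlinarith

/-- For `E ⊆ B(0, r)` of finite `H¹` measure there is a constant `c = c(r)` such that
rotating `E` continuously around any center `z` by any total angle `φ ≠ 0` sweeps out
area at most `c · H¹(E) · |φ| · √(1 + |z|²)`. -/
theorem rotation_sweep_bounded_set (r : ℝ) (hr : 0 < r) :
    ∃ c : ℝ, 0 < c ∧
      ∀ E : Set ℂ, E ⊆ Metric.ball (0 : ℂ) r → μH[1] E ≠ ⊤ →
        ∀ (z : ℂ) (φ : ℝ), φ ≠ 0 →
          volume (⋃ t ∈ Set.Icc (0:ℝ) 1,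
              (fun u : ℂ => Complex.exp ((t * φ : ℝ) * Complex.I) * (u - z) + z) '' E) ≤
            ENNReal.ofReal (c * |φ| * Real.sqrt (1 + ‖z‖ ^ 2)) * μH[1] E := by
  refine ⟨16 * (r + 1), by nlinarith, ?_⟩
  intro E hE hM z φ hφ
  set S := ⋃ t ∈ Set.Icc (0:ℝ) 1,
      (fun u : ℂ => Complex.exp ((t * φ : ℝ) * Complex.I) * (u - z) + z) '' E with hS
  set M := μH[1] E with hMdef
  -- Step 1 : bound for every δ > 0
  have step1 : ∀ δ : ℝ, 0 < δ →
      volume S ≤ ENNReal.ofReal (16 * (|φ| * (r + ‖z‖) + 2 * δ)) * (M + ENNReal.ofReal δ) := by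
    intro δ hδ
    have hpos : (0:ℝ≥0∞) < ENNReal.ofReal δ := ENNReal.ofReal_pos.2 hδ
    have hinf : (⨅ (t : ℕ → Set ℂ) (_ : E ⊆ ⋃ n, t n)
        (_ : ∀ n, EMetric.diam (t n) ≤ ENNReal.ofReal δ),
          ∑' n, ⨆ _ : (t n).Nonempty, EMetric.diam (t n) ^ (1:ℝ)) ≤ M := by
      rw [hMdef, MeasureTheory.Measure.hausdorffMeasure_apply]
      exact le_iSup₂ (f := fun (R : ℝ≥0∞) (_ : 0 < R) =>
        ⨅ (t : ℕ → Set ℂ) (_ : E ⊆ ⋃ n, t n) (_ : ∀ n, EMetric.diam (t n) ≤ R),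
          ∑' n, ⨆ _ : (t n).Nonempty, EMetric.diam (t n) ^ (1:ℝ)) (ENNReal.ofReal δ) hpos
    have hlt : (⨅ (t : ℕ → Set ℂ) (_ : E ⊆ ⋃ n, t n)
        (_ : ∀ n, EMetric.diam (t n) ≤ ENNReal.ofReal δ),
          ∑' n, ⨆ _ : (t n).Nonempty, EMetric.diam (t n) ^ (1:ℝ)) < M + ENNReal.ofReal δ :=
      hinf.trans_lt (ENNReal.lt_add_right hM hpos.ne')
    rw [iInf_lt_iff] at hlt
    obtain ⟨t, hlt⟩ := hlt
    rw [iInf_lt_iff] at hlt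
    obtain ⟨hcov, hlt⟩ := hlt
    rw [iInf_lt_iff] at hlt
    obtain ⟨hdiam, hsum⟩ := hlt
    have hSsub : S ⊆ ⋃ n, ⋃ τ ∈ Set.Icc (0:ℝ) 1,
        (fun u : ℂ => Complex.exp ((τ * φ : ℝ) * Complex.I) * (u - z) + z) '' (t n ∩ E) := by
      intro w hw
      simp only [hS, Set.mem_iUnion, exists_prop, Set.mem_image] at hw ⊢
      obtain ⟨τ, hτ, u, huE, rfl⟩ := hw
      obtain ⟨n, hn⟩ := Set.mem_iUnion.1 (hcov huE)
      exact ⟨n, τ, hτ, u, ⟨hn, huE⟩, rfl⟩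
    calc volume S ≤ ∑' n, volume (⋃ τ ∈ Set.Icc (0:ℝ) 1,
          (fun u : ℂ => Complex.exp ((τ * φ : ℝ) * Complex.I) * (u - z) + z) '' (t n ∩ E)) :=
        (measure_mono hSsub).trans (measure_iUnion_le _)
      _ ≤ ∑' n, ENNReal.ofReal (16 * (|φ| * (r + ‖z‖) + 2 * δ)) *
            (⨆ _ : (t n).Nonempty, EMetric.diam (t n) ^ (1:ℝ)) :=
        ENNReal.tsum_le_tsum fun n => sweep_piece_s10 r hr z φ δ hδ E (t n) hE (hdiam n)
      _ = ENNReal.ofReal (16 * (|φ| * (r + ‖z‖) + 2 * δ)) *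
            ∑' n, ⨆ _ : (t n).Nonempty, EMetric.diam (t n) ^ (1:ℝ) :=
        ENNReal.tsum_mul_left
      _ ≤ _ := mul_le_mul_right hsum.le _
  -- Step 2 : pass to the limit δ → 0⁺
  have step2 : volume S ≤ ENNReal.ofReal (16 * (|φ| * (r + ‖z‖))) * M := by
    have htend : Filter.Tendsto
        (fun δ : ℝ => ENNReal.ofReal (16 * (|φ| * (r + ‖z‖) + 2 * δ)) * (M + ENNReal.ofReal δ))
        (nhdsWithin 0 (Set.Ioi 0)) (nhds (ENNReal.ofReal (16 * (|φ| * (r + ‖z‖))) * M)) := by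
      have h1 : Filter.Tendsto (fun δ : ℝ => ENNReal.ofReal (16 * (|φ| * (r + ‖z‖) + 2 * δ)))
          (nhdsWithin 0 (Set.Ioi 0)) (nhds (ENNReal.ofReal (16 * (|φ| * (r + ‖z‖))))) := by
        have hc : Continuous fun δ : ℝ => ENNReal.ofReal (16 * (|φ| * (r + ‖z‖) + 2 * δ)) :=
          ENNReal.continuous_ofReal.comp (by continuity)
        have := (hc.tendsto 0).mono_left (nhdsWithin_le_nhds (s := Set.Ioi (0:ℝ)))
        simpa using this
      have h2 : Filter.Tendsto (fun δ : ℝ => M + ENNReal.ofReal δ)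
          (nhdsWithin 0 (Set.Ioi 0)) (nhds M) := by
        have hc : Continuous fun δ : ℝ => M + ENNReal.ofReal δ :=
          continuous_const.add ENNReal.continuous_ofReal
        have := (hc.tendsto 0).mono_left (nhdsWithin_le_nhds (s := Set.Ioi (0:ℝ)))
        simpa using this
      have hA0 : ENNReal.ofReal (16 * (|φ| * (r + ‖z‖))) ≠ 0 := by
        rw [Ne, ENNReal.ofReal_eq_zero, not_le]
        have h1' : 0 < |φ| := abs_pos.2 hφ
        have h2' : 0 < r + ‖z‖ := add_pos_of_pos_of_nonneg hr (norm_nonneg z)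
        nlinarith [mul_pos h1' h2']
      exact ENNReal.Tendsto.mul h1 (Or.inl hA0) h2 (Or.inr ENNReal.ofReal_ne_top)
    refine ge_of_tendsto htend ?_
    filter_upwards [self_mem_nhdsWithin] with δ hδ
    exact step1 δ hδ
  refine step2.trans ?_
  apply mul_le_mul_left
  apply ENNReal.ofReal_le_ofReal
  have hs1 : (1:ℝ) ≤ Real.sqrt (1 + ‖z‖ ^ 2) := by
    have h := Real.sqrt_le_sqrt (show (1:ℝ) ≤ 1 + ‖z‖ ^ 2 by nlinarith [sq_nonneg ‖z‖])
    rwa [Real.sqrt_one] at h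
  have hs2 : ‖z‖ ≤ Real.sqrt (1 + ‖z‖ ^ 2) := by
    have h := Real.sqrt_le_sqrt (show ‖z‖ ^ 2 ≤ 1 + ‖z‖ ^ 2 by linarith)
    rwa [Real.sqrt_sq (norm_nonneg z)] at h
  have hrz : r + ‖z‖ ≤ (r + 1) * Real.sqrt (1 + ‖z‖ ^ 2) := by nlinarith
  have hφ0 : (0:ℝ) ≤ |φ| := abs_nonneg φ
  calc 16 * (|φ| * (r + ‖z‖)) ≤ 16 * (|φ| * ((r + 1) * Real.sqrt (1 + ‖z‖ ^ 2))) := by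
        gcongr
    _ = 16 * (r + 1) * |φ| * Real.sqrt (1 + ‖z‖ ^ 2) := by ring
end

section
/- Let E ⊆ ℝ² be a rectifiable set of finite H¹-measure (a countable union of subsets of C¹ curves up to an H¹-null set) contained in a C¹ curve Γ with normal line field ν_x, let z ∈ ℝ², φ ∈ ℝ, and suppose dist(ν_x, z) ≤ D for every x ∈ E. Then the Lebesgue measure of the set swept by E under the continuous rotation around z by total angle φ is at most |φ| · D · H¹(E). -/
open MeasureTheory Set ENNReal
set_option maxHeartbeats 1000000

noncomputable def sweepLMap (u v : ℂ) : ℂ →L[ℝ] ℂ :=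
  Complex.reCLM.smulRight u + Complex.imCLM.smulRight v

lemma sweepLMap_apply (u v h : ℂ) : sweepLMap u v h = h.re • u + h.im • v := rfl

lemma sweepLMap_det (u v : ℂ) : (sweepLMap u v).det = u.re * v.im - u.im * v.re := by
  rw [ContinuousLinearMap.det, ← LinearMap.det_toMatrix Complex.basisOneI,
    Matrix.det_fin_two]
  simp [LinearMap.toMatrix_apply, sweepLMap_apply, Complex.coe_basisOneI_repr, Complex.coe_basisOneI]
  ring

lemma sweepLMap_det_val (θ φ : ℝ) (a b : ℂ) :
    (sweepLMap (Complex.exp (θ * Complex.I) * ((φ:ℂ) * Complex.I * a))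
      (Complex.exp (θ * Complex.I) * b)).det
    = -φ * ((starRingEnd ℂ) a * b).re := by
  set c := Complex.exp (θ * Complex.I) with hc
  have hc1 : c.re * c.re + c.im * c.im = 1 := by
    have : ‖c‖ = 1 := by
      rw [hc, Complex.norm_exp]; simp
    have h2 := Complex.normSq_eq_norm_sq c
    rw [this] at h2
    simpa [Complex.normSq_apply] using h2
  rw [sweepLMap_det]
  simp only [Complex.mul_re, Complex.mul_im, Complex.I_re, Complex.I_im,
    Complex.ofReal_re, Complex.ofReal_im, Complex.conj_re, Complex.conj_im]
  ring_nf
  linear_combination (-(φ * (a.re * b.re + a.im * b.im))) * hc1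

lemma abs_re_conj_mul_le_infDist (p b z : ℂ) (hb : ‖b‖ = 1) :
    |((starRingEnd ℂ) (p - z) * b).re| ≤
      Metric.infDist z {q : ℂ | ∃ s : ℝ, q = p + (s : ℂ) * (Complex.I * b)} := by
  have hne : {q : ℂ | ∃ s : ℝ, q = p + (s : ℂ) * (Complex.I * b)}.Nonempty :=
    ⟨p, 0, by simp⟩
  have : Nonempty {q : ℂ | ∃ s : ℝ, q = p + (s : ℂ) * (Complex.I * b)} := hne.to_subtype
  rw [Metric.infDist_eq_iInf]
  refine le_ciInf ?_
  rintro ⟨q, s, rfl⟩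
  have key : ((starRingEnd ℂ) (p - z) * b).re
      = -((starRingEnd ℂ) b * (z - (p + (s:ℂ) * (Complex.I * b)))).re := by
    simp only [Complex.mul_re, Complex.mul_im, Complex.conj_re, Complex.conj_im,
      Complex.sub_re, Complex.sub_im, Complex.add_re, Complex.add_im,
      Complex.I_re, Complex.I_im, Complex.ofReal_re, Complex.ofReal_im]
    ring
  rw [key, abs_neg]
  calc |((starRingEnd ℂ) b * (z - (p + (s:ℂ) * (Complex.I * b)))).re|
      ≤ ‖(starRingEnd ℂ) b * (z - (p + (s:ℂ) * (Complex.I * b)))‖ :=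
        Complex.abs_re_le_norm _
    _ = dist z (p + (s:ℂ) * (Complex.I * b)) := by
        rw [norm_mul, Complex.norm_conj, Complex.dist_eq]
        rw [show ‖b‖ = 1 from hb]
        ring

lemma sweep_hasFDeriv (L φ : ℝ) (z : ℂ) (Γ Γ' : ℝ → ℂ)
    (hderiv : ∀ t ∈ Icc (0:ℝ) L, HasDerivWithinAt Γ (Γ' t) (Icc 0 L) t)
    (w : ℂ) (hw : w.im ∈ Icc (0:ℝ) L) :
    HasFDerivWithinAt
      (fun w : ℂ => Complex.exp ((w.re * φ : ℝ) * Complex.I) * (Γ w.im - z) + z)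
      (sweepLMap
        (Complex.exp ((w.re * φ : ℝ) * Complex.I) * ((φ:ℂ) * Complex.I * (Γ w.im - z)))
        (Complex.exp ((w.re * φ : ℝ) * Complex.I) * Γ' w.im))
      {w : ℂ | w.im ∈ Icc (0:ℝ) L} w := by
  have hfun : (fun w : ℂ => ((w.re * φ : ℝ) : ℂ) * Complex.I)
      = fun w : ℂ => Complex.reCLM.smulRight ((φ:ℂ) * Complex.I) w := by
    ext w
    simp [Complex.real_smul]
    push_cast
    ring
  have hre : HasFDerivAt (fun w : ℂ => ((w.re * φ : ℝ) : ℂ) * Complex.I)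
      (Complex.reCLM.smulRight ((φ:ℂ) * Complex.I)) w := by
    rw [hfun]
    exact (Complex.reCLM.smulRight ((φ:ℂ) * Complex.I)).hasFDerivAt
  have hexp := hre.cexp
  have hΓ : HasFDerivWithinAt (fun w : ℂ => Γ w.im)
      ((ContinuousLinearMap.smulRight (1 : ℝ →L[ℝ] ℝ) (Γ' w.im)).comp Complex.imCLM)
      {w : ℂ | w.im ∈ Icc (0:ℝ) L} w := by
    exact HasFDerivWithinAt.comp w (hderiv w.im hw).hasFDerivWithinAt
      Complex.imCLM.hasFDerivAt.hasFDerivWithinAt (fun x hx => hx)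
  have hsub := hΓ.sub_const z
  have hmul := (hexp.hasFDerivWithinAt.mul hsub).add_const z
  refine hmul.congr_fderiv ?_
  ext h
  simp [sweepLMap_apply, Complex.real_smul, smul_smul]
  push_cast
  ring

lemma expansion_lemma (L ε δ : ℝ) (Γ Γ' : ℝ → ℂ)
    (hderiv : ∀ t ∈ Icc (0:ℝ) L, HasDerivWithinAt Γ (Γ' t) (Icc 0 L) t)
    (hunit : ∀ t ∈ Icc (0:ℝ) L, ‖Γ' t‖ = 1)
    (hδ : ∀ s ∈ Icc (0:ℝ) L, ∀ t ∈ Icc (0:ℝ) L, |s - t| ≤ δ → ‖Γ' s - Γ' t‖ ≤ ε)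
    (s t : ℝ) (hs : s ∈ Icc (0:ℝ) L) (ht : t ∈ Icc (0:ℝ) L) (hst : |s - t| ≤ δ) :
    (1 - ε) * |s - t| ≤ ‖Γ s - Γ t‖ := by
  set S := Icc (0:ℝ) L ∩ Metric.closedBall t δ with hS
  have hconv : Convex ℝ S := (convex_Icc _ _).inter (convex_closedBall _ _)
  have hmemS : ∀ u ∈ S, u ∈ Icc (0:ℝ) L := fun u hu => hu.1
  have hF : ∀ u ∈ S, HasDerivWithinAt (fun u => Γ u - u • Γ' t) (Γ' u - Γ' t) S u := by
    intro u hu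
    have h1 := (hderiv u hu.1).mono (inter_subset_left : S ⊆ Icc 0 L)
    have h2 : HasDerivWithinAt (fun u : ℝ => u • Γ' t) (Γ' t) S u := by
      simpa using ((hasDerivAt_id u).smul_const (Γ' t)).hasDerivWithinAt
    exact h1.sub h2
  have hbound : ∀ u ∈ S, ‖Γ' u - Γ' t‖ ≤ ε := by
    intro u hu
    exact hδ u hu.1 t ht (by simpa [Real.dist_eq] using hu.2)
  have hsS : s ∈ S := ⟨hs, by simpa [Real.dist_eq] using hst⟩
  have htS : t ∈ S := ⟨ht, Metric.mem_closedBall_self (le_trans (abs_nonneg _) hst)⟩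
  have hmv := hconv.norm_image_sub_le_of_norm_hasDerivWithin_le hF hbound htS hsS
  have hid : Γ s - s • Γ' t - (Γ t - t • Γ' t) = (Γ s - Γ t) - (s - t) • Γ' t := by
    module
  rw [hid] at hmv
  have h1 : ‖(s - t) • Γ' t‖ = |s - t| := by
    rw [norm_smul, hunit t ht, Real.norm_eq_abs, mul_one]
  have h2 : ‖(s - t) • Γ' t‖ - ‖Γ s - Γ t‖ ≤ ε * |s - t| := by
    calc ‖(s - t) • Γ' t‖ - ‖Γ s - Γ t‖ ≤ ‖(Γ s - Γ t) - (s - t) • Γ' t‖ := by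
          have := norm_sub_norm_le ((s - t) • Γ' t) (Γ s - Γ t)
          rw [← norm_neg ((Γ s - Γ t) - (s - t) • Γ' t)]
          simpa [neg_sub] using this
      _ ≤ ε * ‖s - t‖ := hmv
      _ = ε * |s - t| := by rw [Real.norm_eq_abs]
  nlinarith [h1, h2]

lemma antilip_measure (ε : ℝ) (hε0 : 0 ≤ ε) (hε : ε < 1) (f : ℝ → ℂ) (A : Set ℝ)
    (hexp : ∀ x ∈ A, ∀ y ∈ A, (1 - ε) * |x - y| ≤ dist (f x) (f y)) :
    volume A ≤ ENNReal.ofReal (1 - ε)⁻¹ * μH[1] (f '' A) := by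
  have h1ε : (0:ℝ) < 1 - ε := by linarith
  set K : NNReal := ⟨(1 - ε)⁻¹, le_of_lt (inv_pos.mpr h1ε)⟩ with hK
  have hinj : Set.InjOn f A := by
    intro x hx y hy hxy
    have := hexp x hx y hy
    rw [hxy, dist_self] at this
    have : |x - y| ≤ 0 := by nlinarith [abs_nonneg (x - y)]
    have := abs_nonpos_iff.mp this
    linarith [sub_eq_zero.mp this]
  set g := Function.invFunOn f A with hg
  have hlip : LipschitzOnWith K g (f '' A) := by
    rw [lipschitzOnWith_iff_dist_le_mul]
    rintro p ⟨x, hx, rfl⟩ q ⟨y, hy, rfl⟩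
    have hgx : g (f x) = x := hinj.leftInvOn_invFunOn hx
    have hgy : g (f y) = y := hinj.leftInvOn_invFunOn hy
    rw [hgx, hgy]
    have := hexp x hx y hy
    rw [Real.dist_eq]
    calc |x - y| = (1-ε)⁻¹ * ((1-ε) * |x-y|) := by field_simp
      _ ≤ (1-ε)⁻¹ * dist (f x) (f y) := by
          apply mul_le_mul_of_nonneg_left this (le_of_lt (inv_pos.mpr h1ε))
      _ = ↑K * dist (f x) (f y) := rfl
  have himg : g '' (f '' A) = A := hinj.invFunOn_image Subset.rfl
  calc volume A = μH[1] A := by rw [MeasureTheory.hausdorffMeasure_real]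
    _ = μH[1] (g '' (f '' A)) := by rw [himg]
    _ ≤ (K : ℝ≥0∞) ^ (1:ℝ) * μH[1] (f '' A) := hlip.hausdorffMeasure_image_le zero_le_one
    _ = ENNReal.ofReal (1 - ε)⁻¹ * μH[1] (f '' A) := by
        congr 1
        rw [ENNReal.rpow_one, ENNReal.ofReal]
        congr 1
        simp [hK, Real.toNNReal, max_eq_left (le_of_lt (inv_pos.mpr h1ε))]
        rfl


theorem rotation_sweep_normal_bound_aux (L : ℝ) (hL : 0 ≤ L) (Γ Γ' : ℝ → ℂ)
    (hderiv : ∀ t ∈ Icc (0:ℝ) L, HasDerivWithinAt Γ (Γ' t) (Icc 0 L) t)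
    (hcont : ContinuousOn Γ' (Icc 0 L))
    (hunit : ∀ t ∈ Icc (0:ℝ) L, ‖Γ' t‖ = 1)
    (E : Set ℂ) (hEsub : E ⊆ Γ '' Icc 0 L) (hEfin : μH[1] E ≠ ⊤)
    (z : ℂ) (φ : ℝ) (D : ℝ) (hD0 : 0 ≤ D)
    (hD : ∀ t ∈ Icc (0:ℝ) L, Γ t ∈ E →
      Metric.infDist z {p : ℂ | ∃ s : ℝ, p = Γ t + (s : ℂ) * (Complex.I * Γ' t)} ≤ D)
    (ε : ℝ) (hε0 : 0 < ε) (hε1 : ε < 1) :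
    volume (⋃ t ∈ Set.Icc (0:ℝ) 1,
        (fun u : ℂ => Complex.exp ((t * φ : ℝ) * Complex.I) * (u - z) + z) '' E) ≤
      ENNReal.ofReal (1-ε)⁻¹ * (ENNReal.ofReal (|φ| * D) * μH[1] E) := by
  classical
  have hΓcont : ContinuousOn Γ (Icc 0 L) := fun t ht => (hderiv t ht).continuousWithinAt
  -- uniform continuity of Γ'
  obtain ⟨δ, hδpos, hδ⟩ := (Metric.uniformContinuousOn_iff.mp
    (isCompact_Icc.uniformContinuousOn_of_continuous hcont)) ε hε0
  set δ0 := δ / 2 with hδ0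
  have hδ0pos : 0 < δ0 := by positivity
  have hδ' : ∀ s ∈ Icc (0:ℝ) L, ∀ t ∈ Icc (0:ℝ) L, |s - t| ≤ δ0 → ‖Γ' s - Γ' t‖ ≤ ε := by
    intro s hs t ht hst
    have : dist s t < δ := by rw [Real.dist_eq]; linarith
    have := hδ s hs t ht this
    rw [dist_eq_norm] at this
    linarith
  set N := Nat.floor (L / δ0) + 1 with hN
  set Iv : ℕ → Set ℝ := fun j => Icc (j*δ0) ((j+1)*δ0) ∩ Icc 0 L with hIv
  have hIvsub : ∀ j, Iv j ⊆ Icc 0 L := fun j => inter_subset_right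
  have hIvdiam : ∀ j, ∀ x ∈ Iv j, ∀ y ∈ Iv j, |x - y| ≤ δ0 := by
    intro j x hx y hy
    rw [abs_le]
    constructor <;> nlinarith [hx.1.1, hx.1.2, hy.1.1, hy.1.2]
  -- the set of good parameters
  set gfun : ℝ → ℝ := fun t => |((starRingEnd ℂ) (Γ t - z) * Γ' t).re| with hgfun
  have hgcont : ContinuousOn gfun (Icc 0 L) := by
    apply ContinuousOn.abs
    apply Complex.continuous_re.comp_continuousOn
    exact (Complex.continuous_conj.comp_continuousOn (hΓcont.sub continuousOn_const)).mul hcont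
  set K : Set ℝ := Icc 0 L ∩ gfun ⁻¹' (Iic D) with hKdef
  have hKclosed : IsClosed K := hgcont.preimage_isClosed_of_isClosed isClosed_Icc isClosed_Iic
  have hTK : ∀ t ∈ Icc (0:ℝ) L, Γ t ∈ E → t ∈ K := by
    intro t ht htE
    refine ⟨ht, ?_⟩
    simp only [mem_preimage, mem_Iic, hgfun]
    exact le_trans (abs_re_conj_mul_le_infDist (Γ t) (Γ' t) z (hunit t ht)) (hD t ht htE)
  -- continuous extension of Γ
  set Γc : ℝ → ℂ := fun x => Γ (max 0 (min L x)) with hΓc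
  have hproj : ∀ x : ℝ, max 0 (min L x) ∈ Icc (0:ℝ) L := by
    intro x
    constructor
    · exact le_max_left _ _
    · rcases le_total 0 (min L x) with h | h
      · rw [max_eq_right h]; exact min_le_left _ _
      · rw [max_eq_left h]; exact hL
  have hΓccont : Continuous Γc :=
    hΓcont.comp_continuous (continuous_const.max (continuous_const.min continuous_id)) hproj
  have hΓc_eq : ∀ s ∈ Icc (0:ℝ) L, Γc s = Γ s := by
    intro s hs
    simp only [hΓc]
    rw [min_eq_right hs.2, max_eq_right hs.1]
  -- measurable hull of E
  obtain ⟨Ehat, hEEhat, hEhatm, hEhatμ⟩ := exists_measurable_superset (μH[1]) E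
  set Cs : ℕ → Set ℂ := fun j => Γ '' Iv j with hCs
  have hCcompact : ∀ j, IsCompact (Cs j) := by
    intro j
    exact (isCompact_Icc.inter isCompact_Icc).image_of_continuousOn
      (hΓcont.mono (hIvsub j))
  set Ds : ℕ → Set ℂ := fun j => Cs j \ ⋃ k ∈ Finset.range j, Cs k with hDs
  have hDmeas : ∀ j, MeasurableSet (Ds j) := by
    intro j
    exact ((hCcompact j).measurableSet).diff
      (Finset.measurableSet_biUnion _ (fun k _ => (hCcompact k).measurableSet))
  set Bs : ℕ → Set ℂ := fun j => Ehat ∩ Ds j with hBs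
  have hBmeas : ∀ j, MeasurableSet (Bs j) := fun j => hEhatm.inter (hDmeas j)
  set As : ℕ → Set ℝ := fun j => Iv j ∩ K ∩ Γc ⁻¹' (Bs j) with hAs
  have hAmeas : ∀ j, MeasurableSet (As j) := by
    intro j
    exact ((measurableSet_Icc.inter measurableSet_Icc).inter hKclosed.measurableSet).inter
      (hΓccont.measurable (hBmeas j))
  have hAsub : ∀ j, As j ⊆ Icc (0:ℝ) L := fun j s hs => hIvsub j hs.1.1
  have hΓA : ∀ j, ∀ s ∈ As j, Γ s ∈ Bs j := by
    intro j s hs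
    have := hs.2
    rwa [mem_preimage, hΓc_eq s (hAsub j hs)] at this
  -- the sweep map
  set f : ℂ → ℂ := fun w => Complex.exp ((w.re * φ : ℝ) * Complex.I) * (Γ w.im - z) + z
    with hf
  set Ss : ℕ → Set ℂ := fun j => {w : ℂ | w.re ∈ Icc (0:ℝ) 1 ∧ w.im ∈ As j} with hSs
  have hSmeas : ∀ j, MeasurableSet (Ss j) := by
    intro j
    exact (Complex.measurable_re measurableSet_Icc).inter
      (Complex.measurable_im (hAmeas j))
  -- cover
  have hcover : (⋃ t ∈ Set.Icc (0:ℝ) 1,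
      (fun u : ℂ => Complex.exp ((t * φ : ℝ) * Complex.I) * (u - z) + z) '' E) ⊆
      ⋃ j ∈ Finset.range N, f '' Ss j := by
    rintro p hp
    simp only [mem_iUnion] at hp
    obtain ⟨t, ht, x, hxE, rfl⟩ := hp
    obtain ⟨s, hsI, rfl⟩ := hEsub hxE
    have hmem : Γ s ∈ Cs (Nat.floor (s / δ0)) := by
      refine ⟨s, ⟨⟨?_, ?_⟩, hsI⟩, rfl⟩
      · calc (Nat.floor (s / δ0) : ℝ) * δ0 ≤ (s / δ0) * δ0 :=
              mul_le_mul_of_nonneg_right (Nat.floor_le (div_nonneg hsI.1 hδ0pos.le)) (le_of_lt hδ0pos)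
        _ = s := by field_simp
      · have := Nat.lt_floor_add_one (s / δ0)
        calc s = (s / δ0) * δ0 := by field_simp
        _ ≤ ((Nat.floor (s / δ0) : ℝ) + 1) * δ0 :=
            mul_le_mul_of_nonneg_right (le_of_lt this) (le_of_lt hδ0pos)
    have hex : ∃ j, Γ s ∈ Cs j := ⟨_, hmem⟩
    set j₀ := Nat.find hex with hj₀
    have hj₀C : Γ s ∈ Cs j₀ := Nat.find_spec hex
    have hj₀N : j₀ < N := by
      have h1 : j₀ ≤ Nat.floor (s / δ0) := Nat.find_min' hex hmem
      have h2 : Nat.floor (s / δ0) ≤ Nat.floor (L / δ0) :=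
        Nat.floor_le_floor (by gcongr; exact hsI.2)
      omega
    have hj₀D : Γ s ∈ Ds j₀ := by
      refine ⟨hj₀C, ?_⟩
      simp only [mem_iUnion, Finset.mem_range]
      rintro ⟨k, hk, hmem⟩
      exact Nat.find_min hex hk hmem
    obtain ⟨s', hs'I, hs'eq⟩ := hj₀C
    have hs'Icc : s' ∈ Icc (0:ℝ) L := hIvsub j₀ hs'I
    have hs'K : s' ∈ K := hTK s' hs'Icc (by rw [hs'eq]; exact hxE)
    have hs'A : s' ∈ As j₀ := by
      refine ⟨⟨hs'I, hs'K⟩, ?_⟩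
      rw [mem_preimage, hΓc_eq s' hs'Icc, hs'eq]
      exact ⟨hEEhat hxE, hj₀D⟩
    simp only [mem_iUnion]
    refine ⟨j₀, Finset.mem_range.mpr hj₀N, (t : ℂ) + (s' : ℂ) * Complex.I, ?_, ?_⟩
    · constructor <;> simp [ht, hs'A]
    · have hre : ((t:ℂ) + (s':ℂ)*Complex.I).re = t := by simp
      have him : ((t:ℂ) + (s':ℂ)*Complex.I).im = s' := by simp
      simp only [hf, hre, him, hs'eq]
  -- per-piece bound
  have hexpand : ∀ j, ∀ x ∈ As j, ∀ y ∈ As j, (1 - ε) * |x - y| ≤ dist (Γ x) (Γ y) := by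
    intro j x hx y hy
    rw [dist_eq_norm]
    exact expansion_lemma L ε δ0 Γ Γ' hderiv hunit hδ' x y (hAsub j hx) (hAsub j hy)
      (hIvdiam j x hx.1.1 y hy.1.1)
  have hpiece : ∀ j, volume (f '' Ss j) ≤
      ENNReal.ofReal (|φ| * D) * (ENNReal.ofReal (1-ε)⁻¹ * μH[1] (Bs j)) := by
    intro j
    set f'd : ℂ → (ℂ →L[ℝ] ℂ) := fun w =>
      sweepLMap (Complex.exp (((w.re * φ : ℝ)) * Complex.I) * ((φ:ℂ) * Complex.I * (Γ w.im - z)))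
        (Complex.exp (((w.re * φ : ℝ)) * Complex.I) * Γ' w.im) with hf'd
    have hder : ∀ w ∈ Ss j, HasFDerivWithinAt f (f'd w) (Ss j) w := by
      intro w hw
      exact (sweep_hasFDeriv L φ z Γ Γ' hderiv w (hAsub j hw.2)).mono
        (fun u hu => hAsub j hu.2)
    have h1 := MeasureTheory.addHaar_image_le_lintegral_abs_det_fderiv volume (hSmeas j) hder
    have hdetb : ∀ w ∈ Ss j, ENNReal.ofReal |(f'd w).det| ≤ ENNReal.ofReal (|φ| * D) := by
      intro w hw
      apply ENNReal.ofReal_le_ofReal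
      rw [hf'd]
      simp only
      rw [sweepLMap_det_val (w.re * φ) φ (Γ w.im - z) (Γ' w.im)]
      have hKw : |((starRingEnd ℂ) (Γ w.im - z) * Γ' w.im).re| ≤ D := hw.2.1.2.2
      calc |-φ * ((starRingEnd ℂ) (Γ w.im - z) * Γ' w.im).re|
          = |φ| * |((starRingEnd ℂ) (Γ w.im - z) * Γ' w.im).re| := by
            rw [abs_mul, abs_neg]
        _ ≤ |φ| * D := mul_le_mul_of_nonneg_left hKw (abs_nonneg φ)
    have h2 : ∫⁻ w in Ss j, ENNReal.ofReal |(f'd w).det| ≤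
        ENNReal.ofReal (|φ| * D) * volume (Ss j) := by
      calc ∫⁻ w in Ss j, ENNReal.ofReal |(f'd w).det|
          ≤ ∫⁻ _ in Ss j, ENNReal.ofReal (|φ| * D) :=
            setLIntegral_mono' (hSmeas j) hdetb
        _ = ENNReal.ofReal (|φ| * D) * volume (Ss j) := setLIntegral_const _ _
    have hvolS : volume (Ss j) = volume (As j) := by
      have hset : Ss j = Complex.measurableEquivRealProd ⁻¹' (Icc (0:ℝ) 1 ×ˢ As j) := by
        ext w
        simp [hSs, Complex.measurableEquivRealProd, Complex.equivRealProd]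
      rw [hset, Complex.volume_preserving_equiv_real_prod.measure_preimage
        ((measurableSet_Icc.prod (hAmeas j)).nullMeasurableSet)]
      rw [show (volume : Measure (ℝ × ℝ)) = (volume : Measure ℝ).prod volume from rfl]
      rw [Measure.prod_prod, Real.volume_Icc]
      norm_num
    have hvolA : volume (As j) ≤ ENNReal.ofReal (1-ε)⁻¹ * μH[1] (Γ '' As j) :=
      antilip_measure ε hε0.le hε1 Γ (As j) (hexpand j)
    have himg : μH[1] (Γ '' As j) ≤ μH[1] (Bs j) := by
      apply measure_mono
      rintro p ⟨s, hs, rfl⟩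
      exact hΓA j s hs
    calc volume (f '' Ss j) ≤ ∫⁻ w in Ss j, ENNReal.ofReal |(f'd w).det| := h1
      _ ≤ ENNReal.ofReal (|φ| * D) * volume (Ss j) := h2
      _ = ENNReal.ofReal (|φ| * D) * volume (As j) := by rw [hvolS]
      _ ≤ ENNReal.ofReal (|φ| * D) * (ENNReal.ofReal (1-ε)⁻¹ * μH[1] (Γ '' As j)) :=
          mul_le_mul_right hvolA _
      _ ≤ ENNReal.ofReal (|φ| * D) * (ENNReal.ofReal (1-ε)⁻¹ * μH[1] (Bs j)) := by
          exact mul_le_mul_right (mul_le_mul_right himg _) _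
  -- disjointness of the Bs
  have hdisj : Set.PairwiseDisjoint (↑(Finset.range N)) Bs := by
    intro j _ k _ hjk
    rw [Function.onFun, Set.disjoint_left]
    rintro p ⟨_, hpj⟩ ⟨_, hpk⟩
    rcases lt_or_gt_of_ne hjk with h | h
    · exact hpk.2 (mem_biUnion (Finset.mem_range.mpr h) hpj.1)
    · exact hpj.2 (mem_biUnion (Finset.mem_range.mpr h) hpk.1)
  have hsum : ∑ j ∈ Finset.range N, μH[1] (Bs j) ≤ μH[1] E := by
    rw [← measure_biUnion_finset hdisj (fun j _ => hBmeas j)]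
    calc μH[1] (⋃ j ∈ Finset.range N, Bs j) ≤ μH[1] Ehat := by
          apply measure_mono
          intro p hp
          simp only [mem_iUnion] at hp
          obtain ⟨jj, _, hpj⟩ := hp
          exact hpj.1
      _ = μH[1] E := hEhatμ
  -- final combination
  calc volume (⋃ t ∈ Set.Icc (0:ℝ) 1,
        (fun u : ℂ => Complex.exp ((t * φ : ℝ) * Complex.I) * (u - z) + z) '' E)
      ≤ volume (⋃ j ∈ Finset.range N, f '' Ss j) := measure_mono hcover
    _ ≤ ∑ j ∈ Finset.range N, volume (f '' Ss j) := measure_biUnion_finset_le _ _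
    _ ≤ ∑ j ∈ Finset.range N,
        ENNReal.ofReal (|φ| * D) * (ENNReal.ofReal (1-ε)⁻¹ * μH[1] (Bs j)) :=
        Finset.sum_le_sum (fun j _ => hpiece j)
    _ = ENNReal.ofReal (1-ε)⁻¹ * (ENNReal.ofReal (|φ| * D) *
        ∑ j ∈ Finset.range N, μH[1] (Bs j)) := by
        rw [Finset.mul_sum, Finset.mul_sum]
        congr 1
        ext j
        ring
    _ ≤ ENNReal.ofReal (1-ε)⁻¹ * (ENNReal.ofReal (|φ| * D) * μH[1] E) :=
        mul_le_mul_right (mul_le_mul_right hsum _) _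

/-- If `E` is a finite-`H¹`-measure subset of a `C¹` curve `Γ` (arc-length
parametrized), and the distance from `z` to the normal line of `Γ` at every point of
`E` is at most `D`, then rotating `E` continuously around `z` by total angle `φ`
sweeps out area at most `|φ| · D · H¹(E)`. -/
theorem rotation_sweep_normal_bound (L : ℝ) (Γ Γ' : ℝ → ℂ)
    (hderiv : ∀ t ∈ Icc (0:ℝ) L, HasDerivWithinAt Γ (Γ' t) (Icc 0 L) t)
    (hcont : ContinuousOn Γ' (Icc 0 L))
    (hunit : ∀ t ∈ Icc (0:ℝ) L, ‖Γ' t‖ = 1)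
    (E : Set ℂ) (hEsub : E ⊆ Γ '' Icc 0 L) (hEfin : μH[1] E ≠ ⊤)
    (z : ℂ) (φ : ℝ) (D : ℝ) (hD0 : 0 ≤ D)
    (hD : ∀ t ∈ Icc (0:ℝ) L, Γ t ∈ E →
      Metric.infDist z {p : ℂ | ∃ s : ℝ, p = Γ t + (s : ℂ) * (Complex.I * Γ' t)} ≤ D) :
    volume (⋃ t ∈ Set.Icc (0:ℝ) 1,
        (fun u : ℂ => Complex.exp ((t * φ : ℝ) * Complex.I) * (u - z) + z) '' E) ≤
      ENNReal.ofReal (|φ| * D) * μH[1] E := by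
  rcases lt_or_ge L 0 with hL | hL
  · have hIcc : Icc (0:ℝ) L = ∅ := Icc_eq_empty (by linarith)
    have hE : E = ∅ := by
      rw [hIcc] at hEsub
      simpa using subset_empty_iff.mp (by simpa using hEsub)
    simp [hE]
  · set c := ENNReal.ofReal (|φ| * D) * μH[1] E with hc
    have key : ∀ n : ℕ, volume (⋃ t ∈ Set.Icc (0:ℝ) 1,
        (fun u : ℂ => Complex.exp ((t * φ : ℝ) * Complex.I) * (u - z) + z) '' E) ≤
        ENNReal.ofReal (1 - 1/((n:ℝ)+2))⁻¹ * c := by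
      intro n
      have h0 : (0:ℝ) < 1/((n:ℝ)+2) := by positivity
      have h1 : 1/((n:ℝ)+2) < 1 := by
        rw [div_lt_one (by positivity)]
        linarith [Nat.cast_nonneg (α := ℝ) n]
      exact rotation_sweep_normal_bound_aux L hL Γ Γ' hderiv hcont hunit E hEsub hEfin z φ D hD0 hD _ h0 h1
    have t1 : Filter.Tendsto (fun n : ℕ => 1/((n:ℝ)+2)) Filter.atTop (nhds 0) := by
      have := Filter.Tendsto.inv_tendsto_atTop
        (Filter.tendsto_atTop_add_const_right Filter.atTop (2:ℝ)
          tendsto_natCast_atTop_atTop)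
      simpa [one_div, Pi.inv_def] using this
    have t2 : Filter.Tendsto (fun n : ℕ => (1 - 1/((n:ℝ)+2))⁻¹) Filter.atTop (nhds 1) := by
      have h := (tendsto_const_nhds (x := (1:ℝ)).sub t1).inv₀ (by norm_num)
      simpa using h
    have hlim : Filter.Tendsto (fun n : ℕ => ENNReal.ofReal (1 - 1/((n:ℝ)+2))⁻¹ * c)
        Filter.atTop (nhds (1 * c)) := by
      apply ENNReal.Tendsto.mul_const _ (Or.inl one_ne_zero)
      have h := ENNReal.tendsto_ofReal t2
      simpa using h
    have := ge_of_tendsto' hlim key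
    rwa [one_mul] at this
end

section
/- Let L ⊆ ℝ² be a segment of length s and direction θ_S, and let θ₀, θ₁ be directions such that θ_S lies strictly between them, with angles α₀, α₁ > 0 from θ_S to θ₀ and θ₁ respectively, and α₀ + α₁ < π/2. Then for every N ≥ 1 there is a polygonal path from one endpoint of L to the other consisting of N segments of direction θ₀ and N segments of direction θ₁ (alternating), each segment of direction θ_j having length s·sin(α_{1−j})/(N·sin(α₀ + α₁)); moreover, for every ε > 0, if N is sufficiently large this polygonal path lies in the ε-neighborhood of L. -/
open Real Set

lemma zig_key (s θS α₀ α₁ : ℝ) (hσ : Real.sin (α₀ + α₁) ≠ 0) (N : ℕ) (hN : (N:ℝ) ≠ 0) :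
    ((s * Real.sin α₁ / (N * Real.sin (α₀ + α₁)) : ℝ) : ℂ) *
        Complex.exp (((θS - α₀ : ℝ)) * Complex.I) +
      ((s * Real.sin α₀ / (N * Real.sin (α₀ + α₁)) : ℝ) : ℂ) *
        Complex.exp (((θS + α₁ : ℝ)) * Complex.I) =
      ((s / N : ℝ) : ℂ) * Complex.exp ((θS : ℝ) * Complex.I) := by
  have hexp : ∀ x : ℝ, Complex.exp ((x:ℂ) * Complex.I) =
      ((Real.cos x : ℝ) : ℂ) + ((Real.sin x : ℝ) : ℂ) * Complex.I := by
    intro x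
    rw [Complex.exp_mul_I]
    simp [Complex.ofReal_cos, Complex.ofReal_sin]
  rw [hexp, hexp, hexp]
  apply Complex.ext <;>
  · simp only [Complex.add_re, Complex.add_im, Complex.mul_re, Complex.mul_im,
      Complex.ofReal_re, Complex.ofReal_im, Complex.I_re, Complex.I_im,
      Real.cos_sub, Real.sin_sub, Real.cos_add, Real.sin_add]
    rw [Real.sin_add] at hσ
    have hσ' : Real.sin α₁ * Real.cos α₀ + Real.sin α₀ * Real.cos α₁ ≠ 0 := by
      convert hσ using 1; ring
    field_simp
    ring_nf
    field_simp

/-- **Basic zigzag.** Let `L` be the segment from `a` to `b = a + s e^{iθ_S}` (`s > 0`),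
and let `θ₀ = θ_S − α₀`, `θ₁ = θ_S + α₁` with `α₀, α₁ > 0` and `α₀ + α₁ < π/2`. Then:
(1) for every `N ≥ 1` there is a polygonal path from `a` to `b` consisting of `N`
segments of direction `θ₀` alternating with `N` segments of direction `θ₁`, each
segment of direction `θ_j` having length `s·sin(α_{1−j})/(N·sin(α₀+α₁))`;
(2) for every `ε > 0`, if `N` is sufficiently large, any such polygonal path lies in
the `ε`-neighborhood of `L`. -/
theorem basic_zigzag (a b : ℂ) (s θS α₀ α₁ : ℝ)
    (hs : 0 < s) (hab : b = a + (s : ℂ) * Complex.exp ((θS : ℝ) * Complex.I))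
    (h₀ : 0 < α₀) (h₁ : 0 < α₁) (hsum : α₀ + α₁ < π / 2) :
    ((∀ N : ℕ, 1 ≤ N → ∃ p : ℕ → ℂ, p 0 = a ∧ p (2 * N) = b ∧
      ∀ j < N,
        p (2 * j + 1) - p (2 * j) =
          ((s * Real.sin α₁ / (N * Real.sin (α₀ + α₁)) : ℝ) : ℂ) *
            Complex.exp (((θS - α₀ : ℝ)) * Complex.I) ∧
        p (2 * j + 2) - p (2 * j + 1) =
          ((s * Real.sin α₀ / (N * Real.sin (α₀ + α₁)) : ℝ) : ℂ) *
            Complex.exp (((θS + α₁ : ℝ)) * Complex.I)) ∧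
    (∀ ε : ℝ, 0 < ε → ∃ N₀ : ℕ, ∀ N : ℕ, N₀ ≤ N → ∀ p : ℕ → ℂ,
      p 0 = a →
      (∀ j < N,
        p (2 * j + 1) - p (2 * j) =
          ((s * Real.sin α₁ / (N * Real.sin (α₀ + α₁)) : ℝ) : ℂ) *
            Complex.exp (((θS - α₀ : ℝ)) * Complex.I) ∧
        p (2 * j + 2) - p (2 * j + 1) =
          ((s * Real.sin α₀ / (N * Real.sin (α₀ + α₁)) : ℝ) : ℂ) *
            Complex.exp (((θS + α₁ : ℝ)) * Complex.I)) →
      (⋃ j ∈ Finset.range (2 * N), segment ℝ (p j) (p (j + 1))) ⊆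
        Metric.thickening ε (segment ℝ a b))) := by
  have hσpos : 0 < Real.sin (α₀ + α₁) :=
    Real.sin_pos_of_pos_of_lt_pi (by linarith) (by linarith [Real.pi_gt_three])
  have hσ : Real.sin (α₀ + α₁) ≠ 0 := ne_of_gt hσpos
  have hsin0 : 0 < Real.sin α₀ :=
    Real.sin_pos_of_pos_of_lt_pi h₀ (by linarith [Real.pi_gt_three])
  have hsin1 : 0 < Real.sin α₁ :=
    Real.sin_pos_of_pos_of_lt_pi h₁ (by linarith [Real.pi_gt_three])
  constructor
  · -- Part 1
    intro N hN
    have hN0 : (N:ℝ) ≠ 0 := by positivity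
    have hNC : (N:ℂ) ≠ 0 := Nat.cast_ne_zero.mpr (by omega)
    set v₀ : ℂ := ((s * Real.sin α₁ / (N * Real.sin (α₀ + α₁)) : ℝ) : ℂ) *
        Complex.exp (((θS - α₀ : ℝ)) * Complex.I) with hv₀
    set v₁ : ℂ := ((s * Real.sin α₀ / (N * Real.sin (α₀ + α₁)) : ℝ) : ℂ) *
        Complex.exp (((θS + α₁ : ℝ)) * Complex.I) with hv₁
    refine ⟨fun k => a + (((k + 1) / 2 : ℕ) : ℂ) * v₀ + ((k / 2 : ℕ) : ℂ) * v₁,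
      by norm_num, ?_, ?_⟩
    · have h2N : (2 * N + 1) / 2 = N := by omega
      have h2N' : (2 * N) / 2 = N := by omega
      simp only [h2N, h2N']
      calc a + (N : ℂ) * v₀ + (N : ℂ) * v₁ = a + (N : ℂ) * (v₀ + v₁) := by ring
      _ = a + (N : ℂ) * (((s / N : ℝ) : ℂ) * Complex.exp ((θS : ℝ) * Complex.I)) := by
          rw [zig_key s θS α₀ α₁ hσ N hN0]
      _ = a + (s : ℂ) * Complex.exp ((θS : ℝ) * Complex.I) := by
          push_cast
          rw [← mul_assoc]
          congr 2
          field_simp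
      _ = b := hab.symm
    · intro j hj
      have e1 : (2 * j + 1 + 1) / 2 = j + 1 := by omega
      have e2 : (2 * j + 1) / 2 = j := by omega
      have e3 : (2 * j + 2 + 1) / 2 = j + 1 := by omega
      have e4 : (2 * j + 2) / 2 = j + 1 := by omega
      have e5 : (2 * j + 1) / 2 = j := by omega
      have e6 : (2 * j) / 2 = j := by omega
      constructor
      · simp only [e1, e2, e5, e6]
        push_cast
        ring
      · simp only [e1, e2, e3, e4]
        push_cast
        ring
  · -- Part 2
    intro ε hε
    refine ⟨⌈2 * s / (Real.sin (α₀ + α₁)) / ε⌉₊ + 1, fun N hN p hp0 hstep => ?_⟩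
    have hN1 : 1 ≤ N := le_trans (by omega) hN
    have hNpos : (0:ℝ) < N := by exact_mod_cast hN1
    have hN0 : (N:ℝ) ≠ 0 := ne_of_gt hNpos
    set σ := Real.sin (α₀ + α₁) with hσdef
    set c₀ : ℝ := s * Real.sin α₁ / (N * σ) with hc₀
    set c₁ : ℝ := s * Real.sin α₀ / (N * σ) with hc₁
    set v₀ : ℂ := ((c₀ : ℝ) : ℂ) * Complex.exp (((θS - α₀ : ℝ)) * Complex.I) with hv₀
    set v₁ : ℂ := ((c₁ : ℝ) : ℂ) * Complex.exp (((θS + α₁ : ℝ)) * Complex.I) with hv₁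
    -- the key smallness estimate
    have hrε : 2 * s / (↑N * σ) < ε := by
      have h1 : 2 * s / σ / ε < N := by
        calc 2 * s / σ / ε ≤ ⌈2 * s / σ / ε⌉₊ := Nat.le_ceil _
        _ < N := by exact_mod_cast hN
      rw [div_lt_iff₀ (by positivity)]
      rw [div_lt_iff₀ hε] at h1
      have h2 : 2 * s / σ * σ < (↑N * ε) * σ :=
        mul_lt_mul_of_pos_right h1 hσpos
      rw [div_mul_cancel₀ _ hσ] at h2
      linarith
    -- norms of the steps
    have hNσ : 0 < (N:ℝ) * σ := by positivity
    have hb0 : ‖v₀‖ ≤ s / (N * σ) := by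
      rw [hv₀, norm_mul,
        Complex.norm_exp_ofReal_mul_I, mul_one, Complex.norm_real, Real.norm_eq_abs,
        abs_of_nonneg (le_of_lt (div_pos (mul_pos hs hsin1) hNσ))]
      have h1 : s * Real.sin α₁ ≤ s := by nlinarith [Real.sin_le_one α₁]
      exact (div_le_div_iff_of_pos_right hNσ).mpr h1
    have hb1 : ‖v₁‖ ≤ s / (N * σ) := by
      rw [hv₁, norm_mul,
        Complex.norm_exp_ofReal_mul_I, mul_one, Complex.norm_real, Real.norm_eq_abs,
        abs_of_nonneg (le_of_lt (div_pos (mul_pos hs hsin0) hNσ))]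
      have h1 : s * Real.sin α₀ ≤ s := by nlinarith [Real.sin_le_one α₀]
      exact (div_le_div_iff_of_pos_right hNσ).mpr h1
    -- closed form on even indices
    have heven : ∀ j ≤ N, p (2 * j) = a + (j : ℂ) * (v₀ + v₁) := by
      intro j hj
      induction j with
      | zero => simpa using hp0
      | succ j ih =>
        have hjN : j < N := by omega
        obtain ⟨hA, hB⟩ := hstep j hjN
        have h1 : p (2 * j + 1) = p (2 * j) + v₀ := by
          rw [← hA]; ring
        have h2 : p (2 * (j + 1)) = p (2 * j + 1) + v₁ := by
          have h3 : 2 * (j + 1) = 2 * j + 2 := by ring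
          rw [h3, ← hB]; ring
        rw [h2, h1, ih (by omega)]
        push_cast
        ring
    have hsum_v : v₀ + v₁ = ((s / N : ℝ) : ℂ) * Complex.exp ((θS : ℝ) * Complex.I) :=
      zig_key s θS α₀ α₁ hσ N hN0
    -- the even points lie on the segment
    have hmem : ∀ j ≤ N, p (2 * j) ∈ segment ℝ a b := by
      intro j hj
      rw [heven j hj, segment_eq_image']
      refine ⟨(j : ℝ) / N, ⟨by positivity, ?_⟩, ?_⟩
      · rw [div_le_one hNpos]; exact_mod_cast hj
      · dsimp only
        rw [hab, hsum_v, Complex.real_smul]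
        push_cast
        field_simp
        ring
    -- main inclusion
    intro x hx
    simp only [mem_iUnion, Finset.mem_range, exists_prop] at hx
    obtain ⟨k, hk, hxk⟩ := hx
    set j := k / 2 with hj
    have hjN : j < N := by omega
    set q := p (2 * j) with hq
    have hqmem : q ∈ segment ℝ a b := hmem j hjN.le
    obtain ⟨hA, hB⟩ := hstep j hjN
    have h1 : p (2 * j + 1) = q + v₀ := by rw [← hA, hq]; ring
    have h2 : p (2 * j + 2) = q + v₀ + v₁ := by rw [← hB, h1]; ring
    set r : ℝ := ‖v₀‖ + ‖v₁‖ with hrdef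
    have hm0 : q ∈ Metric.closedBall q r := by
      simp only [Metric.mem_closedBall, dist_self]
      positivity
    have hm1 : q + v₀ ∈ Metric.closedBall q r := by
      simp only [Metric.mem_closedBall, dist_eq_norm, add_sub_cancel_left]
      have := norm_nonneg v₁; linarith
    have hm2 : q + v₀ + v₁ ∈ Metric.closedBall q r := by
      rw [Metric.mem_closedBall, dist_eq_norm, show q + v₀ + v₁ - q = v₀ + v₁ by ring]
      exact norm_add_le _ _
    have hball : segment ℝ (p k) (p (k + 1)) ⊆ Metric.closedBall q r := by
      rcases (by omega : k = 2 * j ∨ k = 2 * j + 1) with hk' | hk'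
      · have ha1 : p k = q := by rw [hk', hq]
        have ha2 : p (k + 1) = q + v₀ := by
          rw [show k + 1 = 2 * j + 1 by omega, h1]
        rw [ha1, ha2]
        exact (convex_closedBall q r).segment_subset hm0 hm1
      · have ha1 : p k = q + v₀ := by rw [hk', h1]
        have ha2 : p (k + 1) = q + v₀ + v₁ := by
          rw [show k + 1 = 2 * j + 2 by omega, h2]
        rw [ha1, ha2]
        exact (convex_closedBall q r).segment_subset hm1 hm2
    have hdist : dist x q < ε := by
      have hx' : dist x q ≤ r := by
        have := hball hxk
        rwa [Metric.mem_closedBall] at this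
      calc dist x q ≤ r := hx'
      _ ≤ s / (N * σ) + s / (N * σ) := add_le_add hb0 hb1
      _ = 2 * s / (N * σ) := by ring
      _ < ε := hrε
    rw [Metric.mem_thickening_iff]
    exact ⟨q, hqmem, hdist⟩
end

section
/- Let S² be the unit sphere with its arc-length (geodesic) metric, π : S² → ℙ² the quotient map identifying antipodal points, and equip ℙ² with the quotient metric. Let r > 0 and let x, z ∈ ℙ² be represented by points in the standard embedding ℝ² ⊆ ℙ² with |x| ≤ r (Euclidean norm) and |z| > 2r. Then there are constants c₂, c₃ depending only on r with the following property for all sufficiently small δ > 0: if ℓ₁, ℓ₂ are two projective lines through x both meeting the projective ball B(z, δ), then the Euclidean angle between ℓ₁ ∩ ℝ² and ℓ₂ ∩ ℝ² is at most c₂·c₃·δ; consequently, if a line ν through x meets B(z, δ), then the Euclidean distance from z to ν is at most c·δ·√(1 + |z|²) for a constant c depending only on r. -/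
open Real

noncomputable section

/-- The standard embedding of `ℝ² ≅ ℂ` into the projective plane, where points of `ℙ²`
are represented by nonzero vectors of `ℝ³` up to scalar: `x ↦ (x₁, x₂, 1)`. -/
def liftP (x : ℂ) : EuclideanSpace ℝ (Fin 3) :=
  (WithLp.equiv 2 (Fin 3 → ℝ)).symm ![x.re, x.im, 1]

/-- The metric on `ℙ²` induced by the arc-length metric on `S²` via the quotient map
identifying antipodal points: the distance between the points of `ℙ²` represented by
nonzero vectors `u, v ∈ ℝ³` is the acute angle between the lines `ℝu` and `ℝv`. -/
def projDist (u v : EuclideanSpace ℝ (Fin 3)) : ℝ :=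
  Real.arccos (|(inner ℝ u v : ℝ)| / (‖u‖ * ‖v‖))

/-- The real inner product on `ℂ ≅ ℝ²`. -/
def realInner (a b : ℂ) : ℝ := a.re * b.re + a.im * b.im

/-- The (Euclidean) angle in `[0, π/2]` between two directions in `ℝ² ≅ ℂ`. -/
def dirAngle (d₁ d₂ : ℂ) : ℝ :=
  Real.arccos (|realInner d₁ d₂| / (‖d₁‖ * ‖d₂‖))

/-- A direction vector of the affine trace in `ℝ²` of the projective line with
homogeneous normal vector `n`. -/
def dirOf (n : EuclideanSpace ℝ (Fin 3)) : ℂ := ⟨-(n 1), n 0⟩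

/-- The affine trace in `ℝ² ⊆ ℙ²` of the projective line with homogeneous normal
vector `n`. -/
def affineTrace (n : EuclideanSpace ℝ (Fin 3)) : Set ℂ :=
  {p : ℂ | (inner ℝ n (liftP p) : ℝ) = 0}

abbrev E3 := EuclideanSpace ℝ (Fin 3)

lemma inner3 (u v : E3) : (inner ℝ u v : ℝ) = u 0 * v 0 + u 1 * v 1 + u 2 * v 2 := by
  simp [PiLp.inner_apply, Fin.sum_univ_three, RCLike.inner_apply, conj_trivial]; ring

lemma normsq3 (u : E3) : ‖u‖ ^ 2 = u 0 ^ 2 + u 1 ^ 2 + u 2 ^ 2 := by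
  rw [← real_inner_self_eq_norm_sq, inner3]; ring

def cross (u v : E3) : E3 := (WithLp.equiv 2 (Fin 3 → ℝ)).symm
  ![u 1 * v 2 - u 2 * v 1, u 2 * v 0 - u 0 * v 2, u 0 * v 1 - u 1 * v 0]

@[simp] lemma cross_ap0 (u v : E3) : cross u v 0 = u 1 * v 2 - u 2 * v 1 := rfl
@[simp] lemma cross_ap1 (u v : E3) : cross u v 1 = u 2 * v 0 - u 0 * v 2 := rfl
@[simp] lemma cross_ap2 (u v : E3) : cross u v 2 = u 0 * v 1 - u 1 * v 0 := rfl

lemma lagrange (u v : E3) : ‖cross u v‖ ^ 2 = ‖u‖^2 * ‖v‖^2 - (inner ℝ u v : ℝ)^2 := by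
  simp only [normsq3, inner3, cross_ap0, cross_ap1, cross_ap2]; ring

lemma inner_cross_left (u v : E3) : (inner ℝ (cross u v) u : ℝ) = 0 := by
  simp only [inner3, cross_ap0, cross_ap1, cross_ap2]; ring

lemma inner_cross_right (u v : E3) : (inner ℝ (cross u v) v : ℝ) = 0 := by
  simp only [inner3, cross_ap0, cross_ap1, cross_ap2]; ring

lemma triple (a b w : E3) (j : Fin 3) :
    cross (cross a b) w j = (inner ℝ w a : ℝ) * b j - (inner ℝ w b : ℝ) * a j := by
  fin_cases j
  · show cross (cross a b) w 0 = (inner ℝ w a : ℝ) * b 0 - (inner ℝ w b : ℝ) * a 0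
    simp only [inner3, cross_ap0, cross_ap1, cross_ap2]; ring
  · show cross (cross a b) w 1 = (inner ℝ w a : ℝ) * b 1 - (inner ℝ w b : ℝ) * a 1
    simp only [inner3, cross_ap0, cross_ap1, cross_ap2]; ring
  · show cross (cross a b) w 2 = (inner ℝ w a : ℝ) * b 2 - (inner ℝ w b : ℝ) * a 2
    simp only [inner3, cross_ap0, cross_ap1, cross_ap2]; ring

lemma eapply_smul (c : ℝ) (v : E3) (j : Fin 3) : (c • v) j = c * v j := rfl
lemma eapply_sub (u v : E3) (j : Fin 3) : (u - v) j = u j - v j := rfl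

/-- Orthogonal decomposition in the plane `a^⊥` with orthogonal basis `b, a × b`. -/
lemma decomp {a b : E3} (ha : a ≠ 0) (hb : b ≠ 0) (hab : (inner ℝ a b : ℝ) = 0)
    (v : E3) (hva : (inner ℝ v a : ℝ) = 0) (j : Fin 3) :
    ‖b‖^2 * ‖cross a b‖^2 * v j
      = (inner ℝ v b : ℝ) * ‖cross a b‖^2 * b j
        + (inner ℝ v (cross a b) : ℝ) * ‖b‖^2 * (cross a b) j := by
  set Q := cross a b with hQ
  have hQsq : ‖Q‖^2 = ‖a‖^2 * ‖b‖^2 := by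
    rw [hQ, lagrange, hab]; ring
  have hQpos : 0 < ‖Q‖^2 := by
    have := norm_pos_iff.mpr ha; have := norm_pos_iff.mpr hb
    rw [hQsq]; positivity
  set w : E3 := (‖b‖^2 * ‖Q‖^2) • v - ((inner ℝ v b : ℝ) * ‖Q‖^2) • b
      - ((inner ℝ v Q : ℝ) * ‖b‖^2) • Q with hw
  have hwa : (inner ℝ w a : ℝ) = 0 := by
    simp only [hw, inner_sub_left, real_inner_smul_left, hva]
    rw [real_inner_comm a b, hab, hQ, inner_cross_left]
    ring
  have hwb : (inner ℝ w b : ℝ) = 0 := by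
    simp only [hw, inner_sub_left, real_inner_smul_left, real_inner_self_eq_norm_sq]
    rw [hQ, inner_cross_right]
    ring
  have hwQ : (inner ℝ w Q : ℝ) = 0 := by
    simp only [hw, inner_sub_left, real_inner_smul_left, real_inner_self_eq_norm_sq]
    rw [real_inner_comm Q b, hQ, inner_cross_right]
    ring
  have hcrossw : cross Q w = 0 := by
    ext i
    rw [hQ, triple a b w i, hwa, hwb]
    simp
  have hwzero : w = 0 := by
    have hl := lagrange Q w
    rw [hcrossw] at hl
    have h0 : ‖(0:E3)‖ ^ 2 = 0 := by simp
    rw [h0] at hl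
    have hQw : (inner ℝ Q w : ℝ) = 0 := by rw [real_inner_comm]; exact hwQ
    rw [hQw] at hl
    have hw2 : ‖w‖^2 = 0 := by nlinarith
    have : ‖w‖ = 0 := by nlinarith [norm_nonneg w]
    exact norm_eq_zero.mp this
  have hj : w j = 0 := by rw [hwzero]; rfl
  simp only [hw, eapply_sub, eapply_smul] at hj
  linarith

lemma cnormsq (w : ℂ) : ‖w‖^2 = w.re^2 + w.im^2 := by
  rw [Complex.sq_norm, Complex.normSq_apply]; ring

lemma arccos_le_aux {q s t : ℝ} (hq0 : 0 ≤ q) (hs0 : 0 ≤ s) (hqs : q^2+s^2 = 1) (hst : s ≤ t) :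
    Real.arccos q ≤ π/2 * t := by
  have hπ := Real.pi_pos
  rcases le_or_gt 1 t with h | h
  · calc Real.arccos q ≤ π/2 := Real.arccos_le_pi_div_two.mpr hq0
    _ ≤ π/2*t := le_mul_of_one_le_right (by positivity) h
  · have hθ0 := Real.arccos_nonneg q
    have hθπ : Real.arccos q ≤ π/2 := Real.arccos_le_pi_div_two.mpr hq0
    have hsin : Real.sin (Real.arccos q) = s := by
      rw [Real.sin_arccos, show 1 - q^2 = s^2 by linarith, Real.sqrt_sq hs0]
    have hj := Real.mul_le_sin hθ0 hθπ
    rw [hsin] at hj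
    have h2 := mul_le_mul_of_nonneg_left (hj.trans hst) (by positivity : (0:ℝ) ≤ π/2)
    calc Real.arccos q = π/2*(2/π*Real.arccos q) := by field_simp
    _ ≤ π/2 * t := h2

lemma le_of_sq_le_sq' {a b : ℝ} (hb : 0 ≤ b) (h : a^2 ≤ b^2) (ha : 0 ≤ a) : a ≤ b := by
  nlinarith

@[simp] lemma liftP_ap0 (x : ℂ) : liftP x 0 = x.re := rfl
@[simp] lemma liftP_ap1 (x : ℂ) : liftP x 1 = x.im := rfl
@[simp] lemma liftP_ap2 (x : ℂ) : liftP x 2 = 1 := rfl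

lemma liftP_ne (x : ℂ) : liftP x ≠ 0 := by
  intro h
  have h2 : liftP x 2 = 0 := by rw [h]; rfl
  rw [liftP_ap2] at h2
  exact one_ne_zero h2

lemma rel_of_inner {x : ℂ} {n : E3} (h : (inner ℝ n (liftP x) : ℝ) = 0) :
    n 0 * x.re + n 1 * x.im + n 2 = 0 := by
  rw [inner3] at h
  simp only [liftP_ap0, liftP_ap1, liftP_ap2] at h
  linarith

lemma dir_re (n : E3) : (dirOf n).re = -(n 1) := rfl
lemma dir_im (n : E3) : (dirOf n).im = n 0 := rfl

lemma norm_sq_le_dir {r : ℝ} {x : ℂ} (hx2 : x.re^2 + x.im^2 ≤ r^2) {n : E3}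
    (hrel : n 0 * x.re + n 1 * x.im + n 2 = 0) : ‖n‖^2 ≤ (1+r^2) * ‖dirOf n‖^2 := by
  have h2 : n 2 = -(n 0 * x.re + n 1 * x.im) := by linarith
  have h3 : (n 2)^2 = (n 0 * x.re + n 1 * x.im)^2 := by rw [h2]; ring
  have h4 : 0 ≤ (n 0^2 + n 1^2) * (r^2 - (x.re^2 + x.im^2)) :=
    mul_nonneg (by positivity) (by linarith)
  rw [normsq3, cnormsq, dir_re, dir_im]
  nlinarith [sq_nonneg (n 0 * x.im - n 1 * x.re)]

lemma dirOf_ne {x : ℂ} {n : E3} (hn : n ≠ 0)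
    (hrel : n 0 * x.re + n 1 * x.im + n 2 = 0) : dirOf n ≠ 0 := by
  intro h
  have h0 : n 0 = 0 := by have := congrArg Complex.im h; simpa [dir_im] using this
  have h1 : n 1 = 0 := by have := congrArg Complex.re h; simpa [dir_re] using this
  have h2 : n 2 = 0 := by rw [h0, h1] at hrel; linarith
  apply hn
  ext i; fin_cases i
  · simpa using h0
  · simpa using h1
  · simpa using h2

lemma near_perp {u Z n : E3} {δ : ℝ} (hu : u ≠ 0) (hZ : Z ≠ 0)
    (hδ0 : 0 < δ) (hδ1 : δ ≤ 1) (hnu : (inner ℝ n u : ℝ) = 0)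
    (hd : projDist u Z < δ) : |(inner ℝ n Z : ℝ)| ≤ ‖n‖ * ‖Z‖ * δ := by
  have hun : 0 < ‖u‖ := norm_pos_iff.mpr hu
  have hZn : 0 < ‖Z‖ := norm_pos_iff.mpr hZ
  set q : ℝ := |(inner ℝ u Z : ℝ)| / (‖u‖ * ‖Z‖) with hq
  have hq1 : q ≤ 1 := by
    rw [div_le_one (by positivity)]
    exact abs_real_inner_le_norm u Z
  have hq0 : 0 ≤ q := by positivity
  have hcos : Real.cos δ < q := by
    have h1 : Real.cos δ < Real.cos (projDist u Z) := by
      apply Real.cos_lt_cos_of_nonneg_of_le_pi (Real.arccos_nonneg _)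
      · linarith [Real.pi_gt_three]
      · exact hd
    rwa [projDist, Real.cos_arccos (by linarith) hq1] at h1
  have hcospos : 0 < Real.cos δ := by
    apply Real.cos_pos_of_mem_Ioo
    constructor <;> [linarith [Real.pi_gt_three]; linarith [Real.pi_gt_three]]
  set c : ℝ := (inner ℝ u Z : ℝ) / ‖u‖ ^ 2 with hc
  set w : E3 := Z - c • u with hw
  have hnw : (inner ℝ n w : ℝ) = (inner ℝ n Z : ℝ) := by
    simp [hw, inner_sub_right, inner_smul_right, hnu]
  have hwsq : ‖w‖ ^ 2 = ‖Z‖ ^ 2 - (inner ℝ u Z : ℝ)^2 / ‖u‖^2 := by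
    rw [← real_inner_self_eq_norm_sq]
    simp only [hw, inner_sub_left, inner_sub_right, inner_smul_left, inner_smul_right,
      conj_trivial, real_inner_self_eq_norm_sq]
    rw [real_inner_comm u Z]
    field_simp [hc]
    have hcu : ‖u‖^2 * c = (inner ℝ u Z : ℝ) := by rw [hc]; field_simp
    linear_combination (‖u‖^2 * c - (inner ℝ u Z : ℝ)) * hcu
  have hsin : Real.sin δ ≤ δ := Real.sin_le hδ0.le
  have hsinpos : 0 ≤ Real.sin δ :=
    Real.sin_nonneg_of_nonneg_of_le_pi hδ0.le (by linarith [Real.pi_gt_three])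
  have hwle : ‖w‖ ^ 2 ≤ ‖Z‖ ^ 2 * δ ^ 2 := by
    have hqsq : (inner ℝ u Z : ℝ)^2 / ‖u‖^2 = q^2 * ‖Z‖^2 := by
      rw [hq]; rw [div_pow, mul_pow, sq_abs]; field_simp
    have h2 : Real.cos δ ^ 2 + Real.sin δ ^ 2 = 1 := by
      rw [add_comm]; exact Real.sin_sq_add_cos_sq δ
    have : 1 - q ^ 2 ≤ δ ^ 2 := by nlinarith
    rw [hwsq, hqsq]; nlinarith [sq_nonneg ‖Z‖]
  have hCS : |(inner ℝ n Z : ℝ)| ≤ ‖n‖ * ‖w‖ := by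
    rw [← hnw]; exact abs_real_inner_le_norm n w
  have : ‖w‖ ≤ ‖Z‖ * δ := by
    have h0 : 0 ≤ ‖Z‖ * δ := by positivity
    nlinarith [norm_nonneg w]
  nlinarith [norm_nonneg n, abs_nonneg (inner ℝ n Z : ℝ)]

lemma mul_cancel_le {a b c : ℝ} (hc : 0 < c) (h : a * c ≤ b * c) : a ≤ b :=
  le_of_mul_le_mul_right h hc

lemma pos_of_sq_pos {a : ℝ} (h0 : 0 ≤ a) (h : 0 < a^2) : 0 < a := by nlinarith

lemma hlow_aux (a b c d : ℝ) :
    (c-a)^2 + (d-b)^2 ≤ (b*1-1*d)^2 + (1*c-a*1)^2 + (a*d-b*c)^2 := by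
  nlinarith [sq_nonneg (a*d-b*c), sq_nonneg (b-d+(c-a)), sq_nonneg (b-d-(c-a))]

set_option maxHeartbeats 1000000 in
lemma part2 (r δ : ℝ) (hr : 0 < r) (hδ0 : 0 < δ) (x z : ℂ) (hx : ‖x‖ ≤ r)
    (n : E3) (hn : n ≠ 0) (hi : (inner ℝ n (liftP x) : ℝ) = 0)
    (hb : |(inner ℝ n (liftP z) : ℝ)| ≤ ‖n‖ * ‖liftP z‖ * δ) :
    Metric.infDist z (affineTrace n) ≤ Real.sqrt (1+r^2) * δ * Real.sqrt (1 + ‖z‖^2) := by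
  have hrel := rel_of_inner hi
  have hxr2 : x.re^2 + x.im^2 ≤ r^2 := by
    have h := cnormsq x
    have h2 := pow_le_pow_left₀ (norm_nonneg x) hx 2
    linarith
  have hd : ‖n‖^2 ≤ (1+r^2) * ‖dirOf n‖^2 := norm_sq_le_dir hxr2 hrel
  have hdn : dirOf n ≠ 0 := dirOf_ne hn hrel
  have hdpos : 0 < ‖dirOf n‖ := norm_pos_iff.mpr hdn
  have hdsq : ‖dirOf n‖^2 = n 1^2 + n 0^2 := by rw [cnormsq, dir_re, dir_im]; ring
  have hdne : n 1^2 + n 0^2 ≠ 0 := by rw [← hdsq]; positivity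
  have hiz : (inner ℝ n (liftP z) : ℝ) = n 0 * z.re + n 1 * z.im + n 2 := by
    rw [inner3]; simp only [liftP_ap0, liftP_ap1, liftP_ap2]; ring
  set t : ℝ := (inner ℝ n (liftP z) : ℝ) / ‖dirOf n‖^2 with htdef
  set p : ℂ := ⟨z.re - t * n 0, z.im - t * n 1⟩ with hpdef
  have hmem : p ∈ affineTrace n := by
    show (inner ℝ n (liftP p) : ℝ) = 0
    rw [inner3]
    simp only [liftP_ap0, liftP_ap1, liftP_ap2]
    show n 0 * (z.re - t * n 0) + n 1 * (z.im - t * n 1) + n 2 * 1 = 0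
    rw [htdef, hdsq, hiz]
    field_simp
    ring
  have hdistsq : (dist z p)^2 * ‖dirOf n‖^2 = (inner ℝ n (liftP z) : ℝ)^2 := by
    rw [Complex.dist_eq, Complex.sq_norm, Complex.normSq_apply]
    have h1 : (z - p).re = t * n 0 := by rw [hpdef]; simp [Complex.sub_re]
    have h2 : (z - p).im = t * n 1 := by rw [hpdef]; simp [Complex.sub_im]
    rw [h1, h2, htdef, hdsq]
    field_simp
    ring
  have hinf : Metric.infDist z (affineTrace n) ≤ dist z p :=
    Metric.infDist_le_dist_of_mem hmem
  have hnormz : ‖liftP z‖^2 = 1 + ‖z‖^2 := by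
    rw [normsq3, liftP_ap0, liftP_ap1, liftP_ap2, cnormsq]; ring
  set I := (inner ℝ n (liftP z) : ℝ) with hIdef
  set nn := ‖n‖ with hnndef
  set dn := ‖dirOf n‖ with hdndef
  set L := ‖liftP z‖ with hLdef
  set dzp := dist z p with hdzpdef
  set mz := ‖z‖ with hmzdef
  have hdz0 : 0 ≤ dzp := dist_nonneg
  have hnn0 : 0 ≤ nn := norm_nonneg n
  have hL0 : 0 ≤ L := norm_nonneg _
  clear_value I nn dn L dzp mz
  apply le_trans hinf
  apply le_of_sq_le_sq' (by positivity) ?_ hdz0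
  have hRsq : (Real.sqrt (1+r^2) * δ * Real.sqrt (1+mz^2))^2 = (1+r^2) * δ^2 * (1+mz^2) := by
    rw [mul_pow, mul_pow, Real.sq_sqrt (by positivity : (0:ℝ) ≤ 1+r^2),
      Real.sq_sqrt (by positivity : (0:ℝ) ≤ 1+mz^2)]
  rw [hRsq]
  have hI2 : I^2 ≤ (1+r^2) * dn^2 * (1+mz^2) * δ^2 := by
    have h1 : I^2 ≤ nn^2 * (L^2 * δ^2) := by
      have := mul_self_le_mul_self (abs_nonneg I) hb
      have hsq := sq_abs I
      linarith [this, hsq]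
    have h2 := mul_le_mul_of_nonneg_right hd
      (show (0:ℝ) ≤ L^2 * δ^2 by positivity)
    rw [hnormz] at h1 h2
    linarith [h1, h2]
  have hdp2 : (0:ℝ) < dn^2 := by positivity
  have hfin : dzp^2 * dn^2 ≤ ((1+r^2) * δ^2 * (1+mz^2)) * dn^2 := by
    rw [hdistsq]; linarith [hI2]
  exact le_of_mul_le_mul_right hfin hdp2

set_option maxHeartbeats 2000000 in
lemma part1 (r δ : ℝ) (hr : 0 < r) (hδ0 : 0 < δ) (hδ1 : δ ≤ 1) (x z : ℂ)
    (hx : ‖x‖ ≤ r) (hz : 2 * r < ‖z‖) (n₁ n₂ : E3) (hn₁ : n₁ ≠ 0) (hn₂ : n₂ ≠ 0)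
    (hi₁ : (inner ℝ n₁ (liftP x) : ℝ) = 0) (hi₂ : (inner ℝ n₂ (liftP x) : ℝ) = 0)
    (hb₁ : |(inner ℝ n₁ (liftP z) : ℝ)| ≤ ‖n₁‖ * ‖liftP z‖ * δ)
    (hb₂ : |(inner ℝ n₂ (liftP z) : ℝ)| ≤ ‖n₂‖ * ‖liftP z‖ * δ) :
    dirAngle (dirOf n₁) (dirOf n₂)
      ≤ π/2 * (2*(1+r^2) / (r / Real.sqrt ((1+r^2)*(1+4*r^2)))) * δ := by
  have hπ := Real.pi_pos
  have hWpos : (0:ℝ) < (1+r^2)*(1+4*r^2) := by positivity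
  have hsqW : 0 < Real.sqrt ((1+r^2)*(1+4*r^2)) := Real.sqrt_pos.mpr hWpos
  set s₁ : ℝ := r / Real.sqrt ((1+r^2)*(1+4*r^2)) with hs₁def
  have hs₁pos : 0 < s₁ := by rw [hs₁def]; positivity
  -- relations before abbreviating
  have hrel₁ := rel_of_inner hi₁
  have hrel₂ := rel_of_inner hi₂
  have hxr2 : x.re^2 + x.im^2 ≤ r^2 := by
    have h := cnormsq x
    have h2 := pow_le_pow_left₀ (norm_nonneg x) hx 2
    linarith
  set X := liftP x with hXdef
  set Z := liftP z with hZdef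
  have hXne : X ≠ 0 := by rw [hXdef]; exact liftP_ne x
  have hZne : Z ≠ 0 := by rw [hZdef]; exact liftP_ne z
  have hXpos : 0 < ‖X‖ := norm_pos_iff.mpr hXne
  have hZpos : 0 < ‖Z‖ := norm_pos_iff.mpr hZne
  have hXsq : ‖X‖^2 = x.re^2 + x.im^2 + 1 := by
    rw [hXdef, normsq3, liftP_ap0, liftP_ap1, liftP_ap2]; ring
  have hZsq : ‖Z‖^2 = 1 + ‖z‖^2 := by
    rw [hZdef, normsq3, liftP_ap0, liftP_ap1, liftP_ap2, cnormsq]; ring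
  have hX2 : X 2 = 1 := by rw [hXdef]; exact liftP_ap2 x
  have hX0 : X 0 = x.re := by rw [hXdef]; rfl
  have hX1' : X 1 = x.im := by rw [hXdef]; rfl
  have hZ0 : Z 0 = z.re := by rw [hZdef]; rfl
  have hZ1 : Z 1 = z.im := by rw [hZdef]; rfl
  have hZ2 : Z 2 = 1 := by rw [hZdef]; rfl
  clear_value X Z
  have hXub : ‖X‖^2 ≤ 1 + r^2 := by rw [hXsq]; linarith
  have hX1 : 1 ≤ ‖X‖^2 := by rw [hXsq]; linarith [sq_nonneg x.re, sq_nonneg x.im]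
  -- the projection P of Z on X^⊥
  set P : E3 := Z - ((inner ℝ X Z : ℝ) / ‖X‖^2) • X with hPdef
  clear_value P
  have hPX : (inner ℝ P X : ℝ) = 0 := by
    simp only [hPdef, inner_sub_left, real_inner_smul_left, real_inner_self_eq_norm_sq]
    rw [real_inner_comm X Z]
    field_simp; ring
  have hPsq' : ‖X‖^2 * ‖P‖^2 = ‖X‖^2 * ‖Z‖^2 - (inner ℝ X Z : ℝ)^2 := by
    have h : ‖P‖^2 = ‖Z‖^2 - (inner ℝ X Z : ℝ)^2 / ‖X‖^2 := by
      rw [← real_inner_self_eq_norm_sq]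
      simp only [hPdef, inner_sub_left, inner_sub_right, inner_smul_left,
        inner_smul_right, conj_trivial]
      simp only [real_inner_self_eq_norm_sq]
      rw [real_inner_comm X Z]
      field_simp
      ring
    rw [h]; field_simp
  have hlow : (z.re - x.re)^2 + (z.im - x.im)^2 ≤ ‖X‖^2 * ‖P‖^2 := by
    have hlag := lagrange X Z
    rw [hPsq', ← hlag, normsq3]
    simp only [cross_ap0, cross_ap1, cross_ap2, hX0, hX1', hX2, hZ0, hZ1, hZ2]
    linarith [hlow_aux x.re x.im z.re z.im]
  have hsub : (‖z‖/2)^2 ≤ (z.re - x.re)^2 + (z.im - x.im)^2 := by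
    have h1 : ‖z‖ - ‖x‖ ≤ ‖z - x‖ := norm_sub_norm_le z x
    have h2 : ‖z - x‖^2 = (z.re - x.re)^2 + (z.im - x.im)^2 := by
      rw [cnormsq]; simp [Complex.sub_re, Complex.sub_im]
    have h3 : ‖z‖/2 ≤ ‖z‖ - ‖x‖ := by linarith
    have h4 : (0:ℝ) ≤ ‖z‖/2 := by positivity
    calc (‖z‖/2)^2 ≤ ‖z - x‖^2 := pow_le_pow_left₀ h4 (h3.trans h1) 2
      _ = (z.re - x.re)^2 + (z.im - x.im)^2 := h2
  have hPge : s₁^2 * ‖Z‖^2 ≤ ‖P‖^2 := by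
    have hs₁sq : s₁^2 = r^2 / ((1+r^2)*(1+4*r^2)) := by
      rw [hs₁def, div_pow, Real.sq_sqrt hWpos.le]
    rw [hs₁sq, hZsq, div_mul_eq_mul_div, div_le_iff₀ hWpos]
    have hP4 : ‖z‖^2/4 ≤ (1+r^2) * ‖P‖^2 := by
      have hk := mul_le_mul_of_nonneg_right hXub (sq_nonneg ‖P‖)
      linarith [hk, hlow, hsub]
    have hz4 : 4*r^2 < ‖z‖^2 := by
      have h := pow_lt_pow_left₀ hz (by positivity : (0:ℝ) ≤ 2*r) two_ne_zero
      linarith [h]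
    have hk2 := mul_le_mul_of_nonneg_right hP4 (show (0:ℝ) ≤ 1+4*r^2 by positivity)
    linarith [hk2, hz4]
  have hPn2 : (0:ℝ) < ‖P‖^2 := lt_of_lt_of_le (by positivity) hPge
  have hPpos : 0 < ‖P‖ := pos_of_sq_pos (norm_nonneg P) hPn2
  have hPne : P ≠ 0 := norm_pos_iff.mp hPpos
  have hXP : (inner ℝ X P : ℝ) = 0 := by rw [real_inner_comm P X]; exact hPX
  have hQsq : ‖cross X P‖^2 = ‖X‖^2 * ‖P‖^2 := by rw [lagrange, hXP]; ring
  have hQn2 : (0:ℝ) < ‖cross X P‖^2 := by rw [hQsq]; positivity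
  have hQpos : 0 < ‖cross X P‖ := pos_of_sq_pos (norm_nonneg _) hQn2
  -- decomposition of n₁, n₂
  have hnP₁ : (inner ℝ n₁ P : ℝ) = (inner ℝ n₁ Z : ℝ) := by
    rw [hPdef, inner_sub_right, real_inner_smul_right, hi₁]; ring
  have hnP₂ : (inner ℝ n₂ P : ℝ) = (inner ℝ n₂ Z : ℝ) := by
    rw [hPdef, inner_sub_right, real_inner_smul_right, hi₂]; ring
  have e10 := decomp hXne hPne hXP n₁ hi₁ 0
  have e11 := decomp hXne hPne hXP n₁ hi₁ 1
  have e20 := decomp hXne hPne hXP n₂ hi₂ 0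
  have e21 := decomp hXne hPne hXP n₂ hi₂ 1
  rw [hnP₁] at e10 e11
  rw [hnP₂] at e20 e21
  have hPQ2 : P 0 * (cross X P) 1 - P 1 * (cross X P) 0 = ‖P‖^2 := by
    have h := triple X P P 2
    rw [hPX, real_inner_self_eq_norm_sq, cross_ap2, hX2] at h
    linear_combination -h
  have hQD : ‖cross X P‖^2 * (n₁ 0 * n₂ 1 - n₁ 1 * n₂ 0)
      = (inner ℝ n₁ Z : ℝ) * (inner ℝ n₂ (cross X P) : ℝ)
        - (inner ℝ n₂ Z : ℝ) * (inner ℝ n₁ (cross X P) : ℝ) := by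
    have hne : (‖P‖^2 * (‖P‖^2 * ‖cross X P‖^2) : ℝ) ≠ 0 := by positivity
    apply mul_left_cancel₀ hne
    have hgoal : (‖P‖^2 * ‖cross X P‖^2 * n₁ 0) * (‖P‖^2 * ‖cross X P‖^2 * n₂ 1)
        - (‖P‖^2 * ‖cross X P‖^2 * n₁ 1) * (‖P‖^2 * ‖cross X P‖^2 * n₂ 0)
        = ((inner ℝ n₁ Z : ℝ) * ‖cross X P‖^2 * P 0 + (inner ℝ n₁ (cross X P) : ℝ) * ‖P‖^2 * (cross X P) 0)
            * ((inner ℝ n₂ Z : ℝ) * ‖cross X P‖^2 * P 1 + (inner ℝ n₂ (cross X P) : ℝ) * ‖P‖^2 * (cross X P) 1)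
          - ((inner ℝ n₁ Z : ℝ) * ‖cross X P‖^2 * P 1 + (inner ℝ n₁ (cross X P) : ℝ) * ‖P‖^2 * (cross X P) 1)
            * ((inner ℝ n₂ Z : ℝ) * ‖cross X P‖^2 * P 0 + (inner ℝ n₂ (cross X P) : ℝ) * ‖P‖^2 * (cross X P) 0) := by
      rw [e10, e11, e20, e21]
    linear_combination hgoal + (‖P‖^2 * ‖cross X P‖^2) *
      ((inner ℝ n₁ Z : ℝ) * (inner ℝ n₂ (cross X P) : ℝ)
        - (inner ℝ n₂ Z : ℝ) * (inner ℝ n₁ (cross X P) : ℝ)) * hPQ2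
  -- bounds
  have hd₁ : ‖n₁‖^2 ≤ (1+r^2) * ‖dirOf n₁‖^2 := norm_sq_le_dir hxr2 hrel₁
  have hd₂ : ‖n₂‖^2 ≤ (1+r^2) * ‖dirOf n₂‖^2 := norm_sq_le_dir hxr2 hrel₂
  have hdn₁ : dirOf n₁ ≠ 0 := dirOf_ne hn₁ hrel₁
  have hdn₂ : dirOf n₂ ≠ 0 := dirOf_ne hn₂ hrel₂
  have hD₁pos : 0 < ‖dirOf n₁‖ := norm_pos_iff.mpr hdn₁
  have hD₂pos : 0 < ‖dirOf n₂‖ := norm_pos_iff.mpr hdn₂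
  have hnQ₁ : |(inner ℝ n₁ (cross X P) : ℝ)| ≤ ‖n₁‖ * ‖cross X P‖ :=
    abs_real_inner_le_norm n₁ (cross X P)
  have hnQ₂ : |(inner ℝ n₂ (cross X P) : ℝ)| ≤ ‖n₂‖ * ‖cross X P‖ :=
    abs_real_inner_le_norm n₂ (cross X P)
  have hGb : |(inner ℝ n₁ Z : ℝ) * (inner ℝ n₂ (cross X P) : ℝ)
      - (inner ℝ n₂ Z : ℝ) * (inner ℝ n₁ (cross X P) : ℝ)|
      ≤ 2 * ‖n₁‖ * ‖n₂‖ * ‖Z‖ * ‖cross X P‖ * δ := by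
    have t1 : |(inner ℝ n₁ Z : ℝ) * (inner ℝ n₂ (cross X P) : ℝ)|
        ≤ (‖n₁‖ * ‖Z‖ * δ) * (‖n₂‖ * ‖cross X P‖) := by
      rw [abs_mul]
      exact mul_le_mul hb₁ hnQ₂ (abs_nonneg _) (by positivity)
    have t2 : |(inner ℝ n₂ Z : ℝ) * (inner ℝ n₁ (cross X P) : ℝ)|
        ≤ (‖n₂‖ * ‖Z‖ * δ) * (‖n₁‖ * ‖cross X P‖) := by
      rw [abs_mul]
      exact mul_le_mul hb₂ hnQ₁ (abs_nonneg _) (by positivity)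
    have t3 : |(inner ℝ n₁ Z : ℝ) * (inner ℝ n₂ (cross X P) : ℝ)
        - (inner ℝ n₂ Z : ℝ) * (inner ℝ n₁ (cross X P) : ℝ)|
        ≤ |(inner ℝ n₁ Z : ℝ) * (inner ℝ n₂ (cross X P) : ℝ)|
          + |(inner ℝ n₂ Z : ℝ) * (inner ℝ n₁ (cross X P) : ℝ)| := by
      rw [sub_eq_add_neg]
      exact (abs_add_le _ _).trans (by rw [abs_neg])
    linarith [t1, t2, t3]
  have hQge : s₁ * ‖Z‖ ≤ ‖cross X P‖ := by
    apply le_of_sq_le_sq' (norm_nonneg _) ?_ (by positivity)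
    rw [mul_pow, hQsq]
    have hk := mul_le_mul_of_nonneg_right hX1 hPn2.le
    linarith [hk, hPge]
  have hDabs : |(n₁ 0 * n₂ 1 - n₁ 1 * n₂ 0)| * ‖cross X P‖^2
      = |(inner ℝ n₁ Z : ℝ) * (inner ℝ n₂ (cross X P) : ℝ)
        - (inner ℝ n₂ Z : ℝ) * (inner ℝ n₁ (cross X P) : ℝ)| := by
    rw [← hQD, abs_mul, abs_of_nonneg (sq_nonneg ‖cross X P‖)]; ring
  have hD3 : |(n₁ 0 * n₂ 1 - n₁ 1 * n₂ 0)| * ‖cross X P‖ ≤ 2 * ‖n₁‖ * ‖n₂‖ * ‖Z‖ * δ := by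
    apply mul_cancel_le hQpos
    calc |(n₁ 0 * n₂ 1 - n₁ 1 * n₂ 0)| * ‖cross X P‖ * ‖cross X P‖
        = |(n₁ 0 * n₂ 1 - n₁ 1 * n₂ 0)| * ‖cross X P‖^2 := by ring
      _ = |(inner ℝ n₁ Z : ℝ) * (inner ℝ n₂ (cross X P) : ℝ)
          - (inner ℝ n₂ Z : ℝ) * (inner ℝ n₁ (cross X P) : ℝ)| := hDabs
      _ ≤ 2 * ‖n₁‖ * ‖n₂‖ * ‖Z‖ * ‖cross X P‖ * δ := hGb
      _ = 2 * ‖n₁‖ * ‖n₂‖ * ‖Z‖ * δ * ‖cross X P‖ := by ring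
  have hDb : |(n₁ 0 * n₂ 1 - n₁ 1 * n₂ 0)| * s₁ ≤ 2 * ‖n₁‖ * ‖n₂‖ * δ := by
    apply mul_cancel_le hZpos
    have h1 : |(n₁ 0 * n₂ 1 - n₁ 1 * n₂ 0)| * (s₁ * ‖Z‖)
        ≤ |(n₁ 0 * n₂ 1 - n₁ 1 * n₂ 0)| * ‖cross X P‖ :=
      mul_le_mul_of_nonneg_left hQge (abs_nonneg _)
    linarith [h1, hD3]
  have hNN : ‖n₁‖ * ‖n₂‖ ≤ (1+r^2) * (‖dirOf n₁‖ * ‖dirOf n₂‖) := by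
    apply le_of_sq_le_sq' (by positivity) ?_ (by positivity)
    have hk := mul_le_mul hd₁ hd₂ (sq_nonneg ‖n₂‖) (by positivity)
    linarith [hk]
  have hDb2 : |(n₁ 0 * n₂ 1 - n₁ 1 * n₂ 0)|
      ≤ 2*(1+r^2)/s₁ * (‖dirOf n₁‖ * ‖dirOf n₂‖) * δ := by
    rw [show 2*(1+r^2)/s₁ * (‖dirOf n₁‖ * ‖dirOf n₂‖) * δ
        = 2*(1+r^2) * (‖dirOf n₁‖ * ‖dirOf n₂‖) * δ / s₁ by ring, le_div_iff₀ hs₁pos]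
    have h1 := mul_le_mul_of_nonneg_right hNN hδ0.le
    linarith [hDb, h1]
  -- final angle bound
  have hidentity : realInner (dirOf n₁) (dirOf n₂)^2 + (n₁ 0 * n₂ 1 - n₁ 1 * n₂ 0)^2
      = (‖dirOf n₁‖ * ‖dirOf n₂‖)^2 := by
    rw [mul_pow, cnormsq, cnormsq]
    simp only [realInner, dir_re, dir_im]
    ring
  have hNpos : 0 < ‖dirOf n₁‖ * ‖dirOf n₂‖ := by positivity
  have hqs : (|realInner (dirOf n₁) (dirOf n₂)| / (‖dirOf n₁‖ * ‖dirOf n₂‖))^2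
      + (|(n₁ 0 * n₂ 1 - n₁ 1 * n₂ 0)| / (‖dirOf n₁‖ * ‖dirOf n₂‖))^2 = 1 := by
    rw [div_pow, div_pow, sq_abs, sq_abs, ← add_div, hidentity,
      div_self (by positivity : (‖dirOf n₁‖ * ‖dirOf n₂‖)^2 ≠ 0)]
  have hst : |(n₁ 0 * n₂ 1 - n₁ 1 * n₂ 0)| / (‖dirOf n₁‖ * ‖dirOf n₂‖)
      ≤ (2*(1+r^2)/s₁) * δ := by
    rw [div_le_iff₀ hNpos]
    calc |(n₁ 0 * n₂ 1 - n₁ 1 * n₂ 0)|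
        ≤ 2*(1+r^2)/s₁ * (‖dirOf n₁‖ * ‖dirOf n₂‖) * δ := hDb2
      _ = (2*(1+r^2)/s₁) * δ * (‖dirOf n₁‖ * ‖dirOf n₂‖) := by ring
  have haux := arccos_le_aux (by positivity) (by positivity) hqs hst
  rw [dirAngle]
  calc Real.arccos (|realInner (dirOf n₁) (dirOf n₂)| / (‖dirOf n₁‖ * ‖dirOf n₂‖))
      ≤ π/2 * ((2*(1+r^2)/s₁) * δ) := haux
    _ = π/2 * (2*(1+r^2) / (r / Real.sqrt ((1+r^2)*(1+4*r^2)))) * δ := by rw [hs₁def]; ring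

set_option maxHeartbeats 1000000 in
/-- Projective lines through a point `x ∈ ℝ² ⊆ ℙ²` with `|x| ≤ r` that pass near a
point `z` with `|z| > 2r`: there are constants `c₂, c₃` (and `c`) depending only on `r`
such that for all sufficiently small `δ > 0`, any two projective lines through `x`
meeting the projective ball `B(z, δ)` make a Euclidean angle `≤ c₂ c₃ δ` in `ℝ²`;
consequently any line `ν` through `x` meeting `B(z, δ)` satisfies
`dist(z, ν) ≤ c δ √(1 + |z|²)` in `ℝ²`. -/
theorem projective_lines_near_point (r : ℝ) (hr : 0 < r) :
    ∃ c₂ c₃ c δ₀ : ℝ, 0 < c₂ ∧ 0 < c₃ ∧ 0 < c ∧ 0 < δ₀ ∧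
      ∀ δ : ℝ, 0 < δ → δ < δ₀ →
        ∀ x z : ℂ, ‖x‖ ≤ r → 2 * r < ‖z‖ →
          (∀ n₁ n₂ : EuclideanSpace ℝ (Fin 3), n₁ ≠ 0 → n₂ ≠ 0 →
            (inner ℝ n₁ (liftP x) : ℝ) = 0 → (inner ℝ n₂ (liftP x) : ℝ) = 0 →
            (∃ u₁ : EuclideanSpace ℝ (Fin 3), u₁ ≠ 0 ∧ (inner ℝ n₁ u₁ : ℝ) = 0 ∧
              projDist u₁ (liftP z) < δ) →
            (∃ u₂ : EuclideanSpace ℝ (Fin 3), u₂ ≠ 0 ∧ (inner ℝ n₂ u₂ : ℝ) = 0 ∧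
              projDist u₂ (liftP z) < δ) →
            dirAngle (dirOf n₁) (dirOf n₂) ≤ c₂ * c₃ * δ) ∧
          (∀ n : EuclideanSpace ℝ (Fin 3), n ≠ 0 →
            (inner ℝ n (liftP x) : ℝ) = 0 →
            (∃ u : EuclideanSpace ℝ (Fin 3), u ≠ 0 ∧ (inner ℝ n u : ℝ) = 0 ∧
              projDist u (liftP z) < δ) →
            Metric.infDist z (affineTrace n) ≤ c * δ * Real.sqrt (1 + ‖z‖ ^ 2)) := by
  have hsqW : 0 < Real.sqrt ((1+r^2)*(1+4*r^2)) := Real.sqrt_pos.mpr (by positivity)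
  refine ⟨π/2, 2*(1+r^2) / (r / Real.sqrt ((1+r^2)*(1+4*r^2))), Real.sqrt (1+r^2), 1,
    by positivity, div_pos (by positivity) (div_pos hr hsqW), by positivity, one_pos, ?_⟩
  intro δ hδ0 hδ1 x z hx hz
  constructor
  · rintro n₁ n₂ hn₁ hn₂ hi₁ hi₂ ⟨u₁, hu₁, hnu₁, hpd₁⟩ ⟨u₂, hu₂, hnu₂, hpd₂⟩
    exact part1 r δ hr hδ0 hδ1.le x z hx hz n₁ n₂ hn₁ hn₂ hi₁ hi₂
      (near_perp hu₁ (liftP_ne z) hδ0 hδ1.le hnu₁ hpd₁)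
      (near_perp hu₂ (liftP_ne z) hδ0 hδ1.le hnu₂ hpd₂)
  · rintro n hn hi ⟨u, hu, hnu, hpd⟩
    exact part2 r δ hr hδ0 x z hx n hn hi
      (near_perp hu (liftP_ne z) hδ0 hδ1.le hnu hpd)

end
end
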